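/- arXiv:2104.07027 — 6 statements merged into one kernel-verified Lean document; each statement's English description precedes it below -/
import Mathlib

section
/- Let n ≥ 1, p ∈ (0,∞), and let U ∈ Mₙ(ℂ) be a unitary matrix with ‖U − I‖ ≤ 1 (operator norm). Then √3·‖U − I‖_p ≤ ‖U² − I‖_p. -/
open Matrix
open scoped ComplexOrder

set_option synthInstance.maxHeartbeats 1000000
set_option maxHeartbeats 1000000

-- trace of hermitian cfc
lemma trace_hcfc {n : ℕ} {M : Matrix (Fin n) (Fin n) ℂ} (hM : M.IsHermitian) (g : ℝ → ℝ) :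
    (hM.cfc g).trace = ((∑ i, g (hM.eigenvalues i) : ℝ) : ℂ) := by
  rw [Matrix.IsHermitian.cfc, Unitary.conjStarAlgAut_apply, Matrix.trace_mul_cycle,
    Unitary.star_mul_self_of_mem (SetLike.coe_mem _), one_mul, Matrix.trace_diagonal]
  push_cast
  rfl

lemma key_alg {n : ℕ} (U : Matrix (Fin n) (Fin n) ℂ)
    (h1 : star U * U = 1) (h2 : U * star U = 1) :
    (U * U - 1)ᴴ * (U * U - 1) =
      (4 : ℝ) • ((U - 1)ᴴ * (U - 1)) - ((U - 1)ᴴ * (U - 1)) ^ 2 := by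
  rw [← Matrix.star_eq_conjTranspose, ← Matrix.star_eq_conjTranspose]
  have t2 : (2 : Matrix (Fin n) (Fin n) ℂ) = 1 + 1 := by norm_num
  have t4 : (4 : Matrix (Fin n) (Fin n) ℂ) = 1 + 1 + 1 + 1 := by norm_num
  rw [show ((4 : ℝ) • (star (U - 1) * (U - 1)) : Matrix (Fin n) (Fin n) ℂ)
      = (4 : ℕ) • (star (U - 1) * (U - 1)) by
    rw [show (4:ℝ) = ((4:ℕ):ℝ) by norm_num, Nat.cast_smul_eq_nsmul]]
  have e1 : star (U - 1) * (U - 1) = 2 - (U + star U) := by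
    simp only [star_sub, star_one, sub_mul, mul_sub, mul_one, one_mul, h1]
    simp only [t2]; abel
  have hUU : star U * star U * (U * U) = 1 := by
    have : star U * star U * (U * U) = star U * (star U * U) * U := by noncomm_ring
    rw [this, h1, mul_one, h1]
  have e2 : star (U * U - 1) * (U * U - 1) = 2 - (U * U + star U * star U) := by
    simp only [star_sub, star_one, StarMul.star_mul, sub_mul, mul_sub, mul_one, one_mul, hUU]
    simp only [t2]; abel
  have e3 : (U + star U) * (U + star U) = U * U + star U * star U + 2 := by
    rw [add_mul, mul_add, mul_add, h1, h2]
    simp only [t2, t4]; abel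
  rw [e1, e2]
  have e4 : (2 - (U + star U)) ^ 2
      = 4 - ((U + star U) + (U + star U) + (U + star U) + (U + star U))
        + (U + star U) * (U + star U) := by
    simp only [t2, t4]; noncomm_ring
  rw [e4, e3]
  simp only [t2, t4]; abel

lemma eig_le {n : ℕ} (hn : 1 ≤ n) (A : Matrix (Fin n) (Fin n) ℂ)
    (h : ‖Matrix.toEuclideanCLM (𝕜 := ℂ) A‖ ≤ 1) (i : Fin n) :
    (Matrix.posSemidef_conjTranspose_mul_self A).isHermitian.eigenvalues i ≤ 1 := by
  haveI : Nonempty (Fin n) := ⟨⟨0, hn⟩⟩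
  set hB := (Matrix.posSemidef_conjTranspose_mul_self A).isHermitian
  set b := hB.eigenvalues i with hb
  have hmem : b ∈ spectrum ℝ (Aᴴ * A) := hB.eigenvalues_mem_spectrum_real i
  have hmemC : (b : ℂ) ∈ spectrum ℂ (Aᴴ * A) := by
    rw [show ((b : ℂ)) = algebraMap ℝ ℂ b from rfl]
    exact spectrum.algebraMap_mem ℂ hmem
  have hmemT : (b : ℂ) ∈ spectrum ℂ (Matrix.toEuclideanCLM (𝕜 := ℂ) (Aᴴ * A)) := by
    rwa [AlgEquiv.spectrum_eq (Matrix.toEuclideanCLM (𝕜 := ℂ)) (Aᴴ * A)]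
  have hnorm : ‖(b : ℂ)‖ ≤ ‖Matrix.toEuclideanCLM (𝕜 := ℂ) (Aᴴ * A)‖ :=
    spectrum.norm_le_norm_of_mem hmemT
  have hTT : Matrix.toEuclideanCLM (𝕜 := ℂ) (Aᴴ * A)
      = star (Matrix.toEuclideanCLM (𝕜 := ℂ) A) * (Matrix.toEuclideanCLM (𝕜 := ℂ) A) := by
    rw [← Matrix.star_eq_conjTranspose, _root_.map_mul, map_star]
  have hT1 : ‖Matrix.toEuclideanCLM (𝕜 := ℂ) (Aᴴ * A)‖ ≤ 1 := by
    rw [hTT]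
    calc ‖star (Matrix.toEuclideanCLM (𝕜 := ℂ) A) * (Matrix.toEuclideanCLM (𝕜 := ℂ) A)‖
        ≤ ‖star (Matrix.toEuclideanCLM (𝕜 := ℂ) A)‖ * ‖Matrix.toEuclideanCLM (𝕜 := ℂ) A‖ :=
          norm_mul_le _ _
      _ = ‖Matrix.toEuclideanCLM (𝕜 := ℂ) A‖ * ‖Matrix.toEuclideanCLM (𝕜 := ℂ) A‖ := by
          rw [ContinuousLinearMap.star_eq_adjoint, LinearIsometryEquiv.norm_map]
      _ ≤ 1 * 1 := mul_le_mul h h (norm_nonneg _) zero_le_one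
      _ = 1 := one_mul 1
  calc b ≤ |b| := le_abs_self b
    _ = ‖(b : ℂ)‖ := (Complex.norm_real b).symm
    _ ≤ 1 := hnorm.trans hT1

/-- The normalized trace `L^p`-(quasi-)norm `(τ(|A|^p))^{1/p}` of a complex matrix,
computed via the eigenvalues of `Aᴴ * A`: the eigenvalues of `|A|^p` are the
`(p/2)`-th powers of those of `Aᴴ * A`, and the trace of a Hermitian matrix is the
sum of its eigenvalues. -/
noncomputable def lpnorm {m : Type*} [Fintype m] [DecidableEq m] (p : ℝ)
    (A : Matrix m m ℂ) : ℝ :=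
  ((∑ i, ((Matrix.posSemidef_conjTranspose_mul_self A).isHermitian.eigenvalues i) ^ (p / 2)) /
      (Fintype.card m : ℝ)) ^ (1 / p)

/-- The `ℓ² → ℓ²` operator norm of a complex matrix. -/
noncomputable def l2opNorm {m : Type*} [Fintype m] [DecidableEq m]
    (A : Matrix m m ℂ) : ℝ :=
  ‖Matrix.toEuclideanCLM (𝕜 := ℂ) A‖

/-- If `U` is unitary with `‖U − I‖ ≤ 1` (operator norm), then
`√3·‖U − I‖_p ≤ ‖U² − I‖_p`. -/
theorem stmt3 (n : ℕ) (hn : 1 ≤ n) (p : ℝ) (hp : 0 < p)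
    (U : Matrix (Fin n) (Fin n) ℂ) (hU : U ∈ Matrix.unitaryGroup (Fin n) ℂ)
    (h : l2opNorm (U - 1) ≤ 1) :
    Real.sqrt 3 * lpnorm p (U - 1) ≤ lpnorm p (U * U - 1) := by
  obtain ⟨h1, h2⟩ := Unitary.mem_iff.mp hU
  rw [l2opNorm] at h
  have hB : ((U - 1)ᴴ * (U - 1)).PosSemidef := Matrix.posSemidef_conjTranspose_mul_self (U - 1)
  have hC : ((U * U - 1)ᴴ * (U * U - 1)).PosSemidef :=
    Matrix.posSemidef_conjTranspose_mul_self (U * U - 1)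
  have hBsa : IsSelfAdjoint ((U - 1)ᴴ * (U - 1)) := hB.isHermitian
  have hq : 0 < p / 2 := by positivity
  set q := p / 2 with hqdef
  set g : ℝ → ℝ := fun x => |x| ^ q with hgdef
  have hg : Continuous g := (Real.continuous_rpow_const hq.le).comp continuous_abs
  set f : ℝ → ℝ := fun x => 4 * x - x ^ 2 with hfdef
  have hfB : cfc f ((U - 1)ᴴ * (U - 1))
      = (4 : ℝ) • ((U - 1)ᴴ * (U - 1)) - ((U - 1)ᴴ * (U - 1)) ^ 2 := by
    rw [hfdef,
      cfc_sub (fun x : ℝ => 4 * x) (fun x : ℝ => x ^ 2) ((U - 1)ᴴ * (U - 1))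
        (by fun_prop) (by fun_prop),
      cfc_const_mul_id (4 : ℝ) ((U - 1)ᴴ * (U - 1)) hBsa,
      cfc_pow_id ((U - 1)ᴴ * (U - 1)) 2 hBsa]
  have hCf : (U * U - 1)ᴴ * (U * U - 1) = cfc f ((U - 1)ᴴ * (U - 1)) := by
    rw [hfB]; exact key_alg U h1 h2
  have hbnn : ∀ i, 0 ≤ hB.isHermitian.eigenvalues i := hB.eigenvalues_nonneg
  have hcnn : ∀ i, 0 ≤ hC.isHermitian.eigenvalues i := hC.eigenvalues_nonneg
  have hble : ∀ i, hB.isHermitian.eigenvalues i ≤ 1 := fun i => eig_le hn (U - 1) h i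
  have hsum : ∑ i, g (hC.isHermitian.eigenvalues i)
      = ∑ i, g (f (hB.isHermitian.eigenvalues i)) := by
    have e : hC.isHermitian.cfc g = hB.isHermitian.cfc (g ∘ f) := by
      rw [← Matrix.IsHermitian.cfc_eq, ← Matrix.IsHermitian.cfc_eq, hCf,
        ← cfc_comp g f ((U - 1)ᴴ * (U - 1)) hBsa hg.continuousOn (by fun_prop)]
    have e2 := congrArg Matrix.trace e
    rw [trace_hcfc, trace_hcfc] at e2
    exact_mod_cast e2
  have key : ∀ i, (3 : ℝ) ^ q * (hB.isHermitian.eigenvalues i) ^ q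
      ≤ g (f (hB.isHermitian.eigenvalues i)) := by
    intro i
    have hb0 := hbnn i
    have hb1 := hble i
    have hfb : 3 * hB.isHermitian.eigenvalues i ≤ f (hB.isHermitian.eigenvalues i) := by
      simp only [hfdef]
      nlinarith [mul_nonneg (hbnn i) (sub_nonneg.mpr (hble i))]
    have hfb0 : 0 ≤ f (hB.isHermitian.eigenvalues i) := le_trans (by positivity) hfb
    have hgf : g (f (hB.isHermitian.eigenvalues i)) = (f (hB.isHermitian.eigenvalues i)) ^ q := by
      rw [hgdef]; simp only [abs_of_nonneg hfb0]
    rw [hgf]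
    calc (3 : ℝ) ^ q * (hB.isHermitian.eigenvalues i) ^ q
        = (3 * hB.isHermitian.eigenvalues i) ^ q := (Real.mul_rpow (by norm_num) hb0).symm
      _ ≤ (f (hB.isHermitian.eigenvalues i)) ^ q := Real.rpow_le_rpow (by positivity) hfb hq.le
  have hS : (3 : ℝ) ^ q * ∑ i, (hB.isHermitian.eigenvalues i) ^ q
      ≤ ∑ i, (hC.isHermitian.eigenvalues i) ^ q := by
    have e2 : ∀ i, (hC.isHermitian.eigenvalues i) ^ q = g (hC.isHermitian.eigenvalues i) := by
      intro i; rw [hgdef]; simp only [abs_of_nonneg (hcnn i)]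
    calc (3 : ℝ) ^ q * ∑ i, (hB.isHermitian.eigenvalues i) ^ q
        = ∑ i, (3 : ℝ) ^ q * (hB.isHermitian.eigenvalues i) ^ q := Finset.mul_sum _ _ _
      _ ≤ ∑ i, g (f (hB.isHermitian.eigenvalues i)) := Finset.sum_le_sum fun i _ => key i
      _ = ∑ i, g (hC.isHermitian.eigenvalues i) := hsum.symm
      _ = ∑ i, (hC.isHermitian.eigenvalues i) ^ q := by
          exact Finset.sum_congr rfl fun i _ => (e2 i).symm
  -- final arithmetic
  rw [lpnorm, lpnorm]
  set N : ℝ := (Fintype.card (Fin n) : ℝ) with hN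
  have hN0 : 0 < N := by
    rw [hN, Fintype.card_fin]
    exact_mod_cast Nat.lt_of_lt_of_le Nat.zero_lt_one hn
  have hSB0 : 0 ≤ ∑ i, (hB.isHermitian.eigenvalues i) ^ q :=
    Finset.sum_nonneg fun i _ => Real.rpow_nonneg (hbnn i) q
  have h3 : ((3 : ℝ) ^ q) ^ (1 / p) = Real.sqrt 3 := by
    rw [← Real.rpow_mul (by norm_num : (0:ℝ) ≤ 3),
      show q * (1 / p) = 1 / 2 by rw [hqdef]; field_simp, Real.sqrt_eq_rpow]
  calc Real.sqrt 3 * ((∑ i, (hB.isHermitian.eigenvalues i) ^ q) / N) ^ (1 / p)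
      = ((3 : ℝ) ^ q) ^ (1 / p)
        * ((∑ i, (hB.isHermitian.eigenvalues i) ^ q) / N) ^ (1 / p) := by rw [h3]
    _ = ((3 : ℝ) ^ q * ((∑ i, (hB.isHermitian.eigenvalues i) ^ q) / N)) ^ (1 / p) := by
        rw [← Real.mul_rpow (Real.rpow_nonneg (by norm_num) q) (div_nonneg hSB0 hN0.le)]
    _ = (((3 : ℝ) ^ q * ∑ i, (hB.isHermitian.eigenvalues i) ^ q) / N) ^ (1 / p) := by
        rw [mul_div_assoc]
    _ ≤ ((∑ i, (hC.isHermitian.eigenvalues i) ^ q) / N) ^ (1 / p) := by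
        apply Real.rpow_le_rpow
        · positivity
        · gcongr
        · positivity
end

section
/- Let n ≥ 1, p ∈ (0,∞) with p ≠ 2, and let U ∈ Mₙ(ℂ) be a unitary matrix. Then ‖I − U‖_p^p + ‖I + U‖_p^p = 2^p if and only if U = Uᴴ. -/
open Matrix
open scoped ComplexOrder

section Aux

open Polynomial Finset

lemma charpoly_conj_aux {n : ℕ} (P A Q : Matrix (Fin n) (Fin n) ℂ) (h1 : P * Q = 1) :
    (P * A * Q).charpoly = A.charpoly := by
  let f : Matrix (Fin n) (Fin n) ℂ →+* Matrix (Fin n) (Fin n) ℂ[X] :=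
    (Polynomial.C : ℂ →+* ℂ[X]).mapMatrix
  have h2 : Q * P = 1 := mul_eq_one_comm.mp h1
  have hf1 : f P * f Q = 1 := by rw [← _root_.map_mul f, h1, _root_.map_one f]
  have hf2 : f Q * f P = 1 := by rw [← _root_.map_mul f, h2, _root_.map_one f]
  have hc : charmatrix (P * A * Q) = f P * charmatrix A * f Q := by
    simp only [charmatrix, mul_sub, sub_mul]
    congr 1
    · rw [mul_assoc, scalar_commute (X : ℂ[X]) (Commute.all _) (f Q), ← mul_assoc, hf1, one_mul]
    · show _ = f P * f A * f Q
      rw [← _root_.map_mul f, ← _root_.map_mul f]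
  rw [Matrix.charpoly, hc, det_mul, det_mul, mul_comm, ← mul_assoc, ← det_mul, hf2,
    det_one, one_mul, Matrix.charpoly]

lemma eig_multiset {n : ℕ} {M : Matrix (Fin n) (Fin n) ℂ} (hM : M.IsHermitian)
    (d : Fin n → ℝ) (W : Matrix.unitaryGroup (Fin n) ℂ)
    (h : M = (W : Matrix (Fin n) (Fin n) ℂ) * Matrix.diagonal (fun i => (d i : ℂ)) *
      star (W : Matrix (Fin n) (Fin n) ℂ)) :
    Multiset.map d Finset.univ.val = Multiset.map hM.eigenvalues Finset.univ.val := by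
  have key : ∀ (e : Fin n → ℝ) (V : Matrix (Fin n) (Fin n) ℂ), V * star V = 1 →
      M = V * Matrix.diagonal (fun i => (e i : ℂ)) * star V →
      M.charpoly = ∏ i, (X - C (e i : ℂ)) := by
    intro e V hV he
    rw [he, charpoly_conj_aux _ _ _ hV,
      charpoly_of_upperTriangular _ (Matrix.blockTriangular_diagonal _)]
    simp
  have h1 := key d W (Matrix.mem_unitaryGroup_iff.mp W.2) h
  have h2 := key hM.eigenvalues hM.eigenvectorUnitary
    (Matrix.mem_unitaryGroup_iff.mp hM.eigenvectorUnitary.2) ?_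
  swap
  · have := hM.spectral_theorem
    rw [Unitary.conjStarAlgAut_apply] at this
    exact this
  have hprod : ∀ (e : Fin n → ℝ),
      (∏ i, (X - C (e i : ℂ))) = ((univ.val.map (fun i => ((e i : ℂ)))).map
        (fun a => X - C a)).prod := by
    intro e; rw [Multiset.map_map]; rfl
  have h3 : (univ.val.map (fun i => ((d i : ℂ)))) =
      univ.val.map (fun i => ((hM.eigenvalues i : ℂ))) := by
    have := h1.symm.trans h2
    rw [hprod, hprod] at this
    have := congrArg Polynomial.roots this
    rwa [roots_multiset_prod_X_sub_C, roots_multiset_prod_X_sub_C] at this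
  apply Multiset.map_injective (f := (Complex.ofReal : ℝ → ℂ)) Complex.ofReal_injective
  rw [Multiset.map_map, Multiset.map_map]
  exact h3

lemma eig_sum {n : ℕ} {M : Matrix (Fin n) (Fin n) ℂ} (hM : M.IsHermitian)
    (d : Fin n → ℝ) (W : Matrix.unitaryGroup (Fin n) ℂ)
    (h : M = (W : Matrix (Fin n) (Fin n) ℂ) * Matrix.diagonal (fun i => (d i : ℂ)) *
      star (W : Matrix (Fin n) (Fin n) ℂ)) (f : ℝ → ℝ) :
    ∑ i, f (hM.eigenvalues i) = ∑ i, f (d i) := by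
  have h3 := eig_multiset hM d W h
  calc ∑ i, f (hM.eigenvalues i) = ((univ.val.map hM.eigenvalues).map f).sum := by
        rw [Multiset.map_map]; rfl
  _ = ((univ.val.map d).map f).sum := by rw [h3]
  _ = ∑ i, f (d i) := by rw [Multiset.map_map]; rfl

lemma eig_mem {n : ℕ} {M : Matrix (Fin n) (Fin n) ℂ} (hM : M.IsHermitian)
    (d : Fin n → ℝ) (W : Matrix.unitaryGroup (Fin n) ℂ)
    (h : M = (W : Matrix (Fin n) (Fin n) ℂ) * Matrix.diagonal (fun i => (d i : ℂ)) *
      star (W : Matrix (Fin n) (Fin n) ℂ)) (i : Fin n) :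
    ∃ j, hM.eigenvalues j = d i := by
  have h3 := eig_multiset hM d W h
  have : d i ∈ Multiset.map d Finset.univ.val :=
    Multiset.mem_map_of_mem d (Finset.mem_univ i)
  rw [h3] at this
  obtain ⟨j, _, hj⟩ := Multiset.mem_map.mp this
  exact ⟨j, hj⟩

lemma rpow_split {a q : ℝ} (ha : 0 < a) : a ^ q = a * a ^ (q - 1) := by
  rw [show q = 1 + (q - 1) by ring, Real.rpow_add ha, Real.rpow_one]; ring_nf

lemma rpow_add_lt_of_lt_one {a b q : ℝ} (ha : 0 < a) (hb : 0 < b) (hq : 0 < q) (h1 : q < 1) :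
    (a + b) ^ q < a ^ q + b ^ q := by
  have hab : 0 < a + b := by linarith
  have hA : a * (a + b) ^ (q - 1) < a ^ q := by
    rw [rpow_split ha]
    exact mul_lt_mul_of_pos_left
      (Real.rpow_lt_rpow_of_neg ha (by linarith) (by linarith)) ha
  have hB : b * (a + b) ^ (q - 1) < b ^ q := by
    rw [rpow_split hb]
    exact mul_lt_mul_of_pos_left
      (Real.rpow_lt_rpow_of_neg hb (by linarith) (by linarith)) hb
  have : (a + b) ^ q = a * (a + b) ^ (q - 1) + b * (a + b) ^ (q - 1) := by
    rw [rpow_split hab]; ring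
  linarith

lemma rpow_add_gt_of_gt_one {a b q : ℝ} (ha : 0 < a) (hb : 0 < b) (h1 : 1 < q) :
    a ^ q + b ^ q < (a + b) ^ q := by
  have hab : 0 < a + b := by linarith
  have hA : a ^ q < a * (a + b) ^ (q - 1) := by
    rw [rpow_split ha]
    exact mul_lt_mul_of_pos_left
      (Real.rpow_lt_rpow (le_of_lt ha) (by linarith) (by linarith)) ha
  have hB : b ^ q < b * (a + b) ^ (q - 1) := by
    rw [rpow_split hb]
    exact mul_lt_mul_of_pos_left
      (Real.rpow_lt_rpow (le_of_lt hb) (by linarith) (by linarith)) hb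
  have : (a + b) ^ q = a * (a + b) ^ (q - 1) + b * (a + b) ^ (q - 1) := by
    rw [rpow_split hab]; ring
  linarith

lemma pair_eq_of_sq {μ q : ℝ} (hq : 0 < q) (h : μ ^ 2 = 4) :
    (2 - μ) ^ q + (2 + μ) ^ q = 4 ^ q := by
  have : (μ - 2) * (μ + 2) = 0 := by nlinarith
  rcases mul_eq_zero.mp this with h' | h'
  · have : μ = 2 := by linarith
    subst this
    norm_num [Real.zero_rpow hq.ne']
  · have : μ = -2 := by linarith
    subst this
    norm_num [Real.zero_rpow hq.ne']

lemma pair_iff_sq {μ q : ℝ} (hq : 0 < q) (hq1 : q ≠ 1) (ha : 0 ≤ 2 - μ) (hb : 0 ≤ 2 + μ) :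
    (2 - μ) ^ q + (2 + μ) ^ q = 4 ^ q ↔ μ ^ 2 = 4 := by
  constructor
  · intro h
    by_contra hne
    have ha' : 0 < 2 - μ := by
      rcases eq_or_lt_of_le ha with h' | h'
      · exact absurd (by nlinarith : μ ^ 2 = 4) hne
      · exact h'
    have hb' : 0 < 2 + μ := by
      rcases eq_or_lt_of_le hb with h' | h'
      · exact absurd (by nlinarith : μ ^ 2 = 4) hne
      · exact h'
    have h4 : (2 - μ) + (2 + μ) = 4 := by ring
    rcases lt_or_gt_of_ne hq1 with hlt | hgt
    · have := rpow_add_lt_of_lt_one ha' hb' hq hlt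
      rw [h4] at this; linarith
    · have := rpow_add_gt_of_gt_one ha' hb' hgt
      rw [h4] at this; linarith
  · exact pair_eq_of_sq hq

lemma pair_ge_of_lt_one {μ q : ℝ} (hq : 0 < q) (h1 : q < 1) (ha : 0 ≤ 2 - μ) (hb : 0 ≤ 2 + μ) :
    4 ^ q ≤ (2 - μ) ^ q + (2 + μ) ^ q := by
  rcases eq_or_lt_of_le ha with h' | h'
  · exact le_of_eq (pair_eq_of_sq hq (by nlinarith)).symm
  rcases eq_or_lt_of_le hb with h'' | h''
  · exact le_of_eq (pair_eq_of_sq hq (by nlinarith)).symm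
  have := rpow_add_lt_of_lt_one h' h'' hq h1
  rw [show (2 - μ) + (2 + μ) = 4 by ring] at this
  linarith

lemma pair_le_of_gt_one {μ q : ℝ} (h1 : 1 < q) (ha : 0 ≤ 2 - μ) (hb : 0 ≤ 2 + μ) :
    (2 - μ) ^ q + (2 + μ) ^ q ≤ 4 ^ q := by
  have hq : 0 < q := by linarith
  rcases eq_or_lt_of_le ha with h' | h'
  · exact le_of_eq (pair_eq_of_sq hq (by nlinarith))
  rcases eq_or_lt_of_le hb with h'' | h''
  · exact le_of_eq (pair_eq_of_sq hq (by nlinarith))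
  have := rpow_add_gt_of_gt_one h' h'' h1
  rw [show (2 - μ) + (2 + μ) = 4 by ring] at this
  linarith

lemma herm_iff_sq {n : ℕ} (U : Matrix (Fin n) (Fin n) ℂ)
    (hU1 : Uᴴ * U = 1) (hU2 : U * Uᴴ = 1) :
    (U + Uᴴ) * (U + Uᴴ) = 4 ↔ Uᴴ = U := by
  constructor
  · intro hHH
    set N : Matrix (Fin n) (Fin n) ℂ := U * U - 1 with hNdef
    have hNc : Nᴴ = Uᴴ * Uᴴ - 1 := by
      simp [hNdef, conjTranspose_sub, conjTranspose_mul]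
    have g1 : U * U * (Uᴴ * Uᴴ) = 1 := by
      calc U * U * (Uᴴ * Uᴴ) = U * (U * Uᴴ) * Uᴴ := by noncomm_ring
      _ = 1 := by rw [hU2, mul_one, hU2]
    have g2 : Uᴴ * Uᴴ * (U * U) = 1 := by
      calc Uᴴ * Uᴴ * (U * U) = Uᴴ * (Uᴴ * U) * U := by noncomm_ring
      _ = 1 := by rw [hU1, mul_one, hU1]
    have f1 : U * (U + Uᴴ) = U * U + 1 := by rw [mul_add, hU2]
    have f2 : (U + Uᴴ) * U = U * U + 1 := by rw [add_mul, hU1]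
    have hsq : (U * U + 1) * (U * U + 1) = 4 * (U * U) := by
      calc (U * U + 1) * (U * U + 1) = (U * (U + Uᴴ)) * ((U + Uᴴ) * U) := by rw [f1, f2]
      _ = U * ((U + Uᴴ) * (U + Uᴴ)) * U := by noncomm_ring
      _ = U * (4 : Matrix (Fin n) (Fin n) ℂ) * U := by rw [hHH]
      _ = 4 * (U * U) := by noncomm_ring
    have hNN : N * N = 0 := by
      have : N * N = (U * U + 1) * (U * U + 1) - 4 * (U * U) := by
        rw [hNdef]; noncomm_ring
      rw [this, hsq, sub_self]
    have hnorm : N * Nᴴ = Nᴴ * N := by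
      have e1 : N * Nᴴ = U * U * (Uᴴ * Uᴴ) - U * U - Uᴴ * Uᴴ + 1 := by
        rw [hNdef, hNc]; noncomm_ring
      have e2 : Nᴴ * N = Uᴴ * Uᴴ * (U * U) - U * U - Uᴴ * Uᴴ + 1 := by
        rw [hNdef, hNc]; noncomm_ring
      rw [e1, e2, g1, g2]
    have hMM : (Nᴴ * N) * (Nᴴ * N) = 0 := by
      calc (Nᴴ * N) * (Nᴴ * N) = Nᴴ * (N * Nᴴ) * N := by noncomm_ring
      _ = Nᴴ * (Nᴴ * N) * N := by rw [hnorm]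
      _ = (Nᴴ * Nᴴ) * (N * N) := by noncomm_ring
      _ = 0 := by rw [hNN, mul_zero]
    have hM0 : Nᴴ * N = 0 := by
      have hc : (Nᴴ * N)ᴴ = Nᴴ * N := by
        rw [conjTranspose_mul, conjTranspose_conjTranspose]
      have := Matrix.conjTranspose_mul_self_eq_zero (A := Nᴴ * N)
      rw [hc, hMM] at this
      exact (this.mp rfl)
    have hN0 : N = 0 := Matrix.conjTranspose_mul_self_eq_zero.mp hM0
    have hUU : U * U = 1 := by
      have := hN0; rw [hNdef, sub_eq_zero] at this; exact this
    calc Uᴴ = Uᴴ * (U * U) := by rw [hUU, mul_one]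
    _ = (Uᴴ * U) * U := by noncomm_ring
    _ = U := by rw [hU1, one_mul]
  · intro hsym
    have hUU : U * U = 1 := by rw [hsym] at hU1; exact hU1
    rw [hsym]
    calc (U + U) * (U + U) = 4 * (U * U) := by noncomm_ring
    _ = 4 := by rw [hUU, mul_one]

end Aux

/-- For `p ≠ 2` and unitary `U`: `‖I − U‖_p^p + ‖I + U‖_p^p = 2^p` iff `U = Uᴴ`. -/
theorem stmt4 (n : ℕ) (hn : 1 ≤ n) (p : ℝ) (hp : 0 < p) (hp2 : p ≠ 2)
    (U : Matrix (Fin n) (Fin n) ℂ) (hU : U ∈ Matrix.unitaryGroup (Fin n) ℂ) :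
    lpnorm p (1 - U) ^ p + lpnorm p (1 + U) ^ p = (2 : ℝ) ^ p ↔ Uᴴ = U := by
  have hU1 : Uᴴ * U = 1 := hU.1
  have hU2 : U * Uᴴ = 1 := hU.2
  have hq : 0 < p / 2 := by linarith
  have hq1 : p / 2 ≠ 1 := by
    intro h; apply hp2; linarith [h]
  set H : Matrix (Fin n) (Fin n) ℂ := U + Uᴴ with hHdef
  have hH : H.IsHermitian := by
    rw [Matrix.IsHermitian, hHdef, conjTranspose_add, conjTranspose_conjTranspose, add_comm]
  set W := hH.eigenvectorUnitary with hWdef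
  set μ := hH.eigenvalues with hμdef
  have hspec : H = (W : Matrix (Fin n) (Fin n) ℂ) * Matrix.diagonal (fun i => (μ i : ℂ)) *
      star (W : Matrix (Fin n) (Fin n) ℂ) := by
    have := hH.spectral_theorem
    rw [Unitary.conjStarAlgAut_apply] at this
    exact this
  have hWW : (W : Matrix (Fin n) (Fin n) ℂ) * star (W : Matrix (Fin n) (Fin n) ℂ) = 1 :=
    Matrix.mem_unitaryGroup_iff.mp W.2
  have hWW' : star (W : Matrix (Fin n) (Fin n) ℂ) * (W : Matrix (Fin n) (Fin n) ℂ) = 1 :=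
    Matrix.mem_unitaryGroup_iff'.mp W.2
  -- Decompositions of (1∓U)ᴴ(1∓U)
  have hdiag2 : ∀ (s : ℝ → ℝ → ℝ) (sC : ℂ → ℂ → ℂ),
      (∀ x y : ℝ, ((s x y : ℝ) : ℂ) = sC (x : ℂ) (y : ℂ)) → True := fun _ _ _ => trivial
  have hA : (1 - U)ᴴ * (1 - U) = (W : Matrix (Fin n) (Fin n) ℂ) *
      Matrix.diagonal (fun i => ((2 - μ i : ℝ) : ℂ)) * star (W : Matrix (Fin n) (Fin n) ℂ) := by
    have hd : Matrix.diagonal (fun i => ((2 - μ i : ℝ) : ℂ)) =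
        Matrix.diagonal (fun _ => (2 : ℂ)) - Matrix.diagonal (fun i => (μ i : ℂ)) := by
      rw [Matrix.diagonal_sub]
      congr 1; funext i; push_cast; ring
    have hR : (W : Matrix (Fin n) (Fin n) ℂ) *
        (Matrix.diagonal (fun _ => (2 : ℂ)) - Matrix.diagonal (fun i => (μ i : ℂ))) *
        star (W : Matrix (Fin n) (Fin n) ℂ) = 2 - H := by
      rw [Matrix.diagonal_ofNat, mul_sub, sub_mul, ← hspec]
      have h2c : (W : Matrix (Fin n) (Fin n) ℂ) * 2 * star (W : Matrix (Fin n) (Fin n) ℂ) =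
          2 * ((W : Matrix (Fin n) (Fin n) ℂ) * star (W : Matrix (Fin n) (Fin n) ℂ)) := by
        noncomm_ring
      rw [h2c, hWW, mul_one]
    rw [hd, hR]
    calc (1 - U)ᴴ * (1 - U) = (1 - Uᴴ) * (1 - U) := by
          rw [conjTranspose_sub, conjTranspose_one]
    _ = 1 - U - Uᴴ + Uᴴ * U := by noncomm_ring
    _ = 2 - H := by
          rw [hU1, hHdef, show (2 : Matrix (Fin n) (Fin n) ℂ) = 1 + 1 from one_add_one_eq_two.symm]
          noncomm_ring
  have hB : (1 + U)ᴴ * (1 + U) = (W : Matrix (Fin n) (Fin n) ℂ) *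
      Matrix.diagonal (fun i => ((2 + μ i : ℝ) : ℂ)) * star (W : Matrix (Fin n) (Fin n) ℂ) := by
    have hd : Matrix.diagonal (fun i => ((2 + μ i : ℝ) : ℂ)) =
        Matrix.diagonal (fun _ => (2 : ℂ)) + Matrix.diagonal (fun i => (μ i : ℂ)) := by
      rw [Matrix.diagonal_add]
      congr 1; funext i; push_cast; ring
    have hR : (W : Matrix (Fin n) (Fin n) ℂ) *
        (Matrix.diagonal (fun _ => (2 : ℂ)) + Matrix.diagonal (fun i => (μ i : ℂ))) *
        star (W : Matrix (Fin n) (Fin n) ℂ) = 2 + H := by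
      rw [Matrix.diagonal_ofNat, mul_add, add_mul, ← hspec]
      have h2c : (W : Matrix (Fin n) (Fin n) ℂ) * 2 * star (W : Matrix (Fin n) (Fin n) ℂ) =
          2 * ((W : Matrix (Fin n) (Fin n) ℂ) * star (W : Matrix (Fin n) (Fin n) ℂ)) := by
        noncomm_ring
      rw [h2c, hWW, mul_one]
    rw [hd, hR]
    calc (1 + U)ᴴ * (1 + U) = (1 + Uᴴ) * (1 + U) := by
          rw [conjTranspose_add, conjTranspose_one]
    _ = 1 + U + Uᴴ + Uᴴ * U := by noncomm_ring
    _ = 2 + H := by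
          rw [hU1, hHdef, show (2 : Matrix (Fin n) (Fin n) ℂ) = 1 + 1 from one_add_one_eq_two.symm]
          abel
  -- nonnegativity
  have ha_nonneg : ∀ i, 0 ≤ 2 - μ i := by
    intro i
    obtain ⟨j, hj⟩ := eig_mem (Matrix.posSemidef_conjTranspose_mul_self (1 - U)).isHermitian
      (fun i => 2 - μ i) W hA i
    rw [← hj]
    exact (Matrix.posSemidef_conjTranspose_mul_self (1 - U)).eigenvalues_nonneg j
  have hb_nonneg : ∀ i, 0 ≤ 2 + μ i := by
    intro i
    obtain ⟨j, hj⟩ := eig_mem (Matrix.posSemidef_conjTranspose_mul_self (1 + U)).isHermitian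
      (fun i => 2 + μ i) W hB i
    rw [← hj]
    exact (Matrix.posSemidef_conjTranspose_mul_self (1 + U)).eigenvalues_nonneg j
  -- lpnorm computation
  have hn0 : (0 : ℝ) < (n : ℝ) := by exact_mod_cast hn
  have hlp : ∀ (A : Matrix (Fin n) (Fin n) ℂ) (d : Fin n → ℝ), (∀ i, 0 ≤ d i) →
      Aᴴ * A = (W : Matrix (Fin n) (Fin n) ℂ) * Matrix.diagonal (fun i => (d i : ℂ)) *
        star (W : Matrix (Fin n) (Fin n) ℂ) →
      lpnorm p A ^ p = (∑ i, d i ^ (p / 2)) / (n : ℝ) := by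
    intro A d hd hAd
    have hsum := eig_sum (Matrix.posSemidef_conjTranspose_mul_self A).isHermitian d W hAd
      (fun x => x ^ (p / 2))
    have hS : 0 ≤ (∑ i, d i ^ (p / 2)) / (n : ℝ) :=
      div_nonneg (Finset.sum_nonneg fun i _ => Real.rpow_nonneg (hd i) _) (le_of_lt hn0)
    rw [lpnorm]
    simp only [Fintype.card_fin]
    rw [hsum, ← Real.rpow_mul hS, one_div_mul_cancel hp.ne', Real.rpow_one]
  rw [hlp (1 - U) (fun i => 2 - μ i) ha_nonneg hA, hlp (1 + U) (fun i => 2 + μ i) hb_nonneg hB]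
  -- 2^p = 4^(p/2)
  have h42 : (4 : ℝ) = (2 : ℝ) ^ (2 : ℝ) := by
    rw [show (2 : ℝ) = ((2 : ℕ) : ℝ) by norm_num, Real.rpow_natCast]
    norm_num
  have h2p : (2 : ℝ) ^ p = (4 : ℝ) ^ (p / 2) := by
    rw [h42, ← Real.rpow_mul (by norm_num : (0:ℝ) ≤ 2)]
    congr 1; ring
  rw [h2p]
  -- reduce to sum equality
  have hstep1 : (∑ i, (2 - μ i) ^ (p / 2)) / (n : ℝ) + (∑ i, (2 + μ i) ^ (p / 2)) / (n : ℝ) =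
      (4 : ℝ) ^ (p / 2) ↔
      (∑ i, ((2 - μ i) ^ (p / 2) + (2 + μ i) ^ (p / 2))) = ∑ _i : Fin n, (4 : ℝ) ^ (p / 2) := by
    rw [← add_div, div_eq_iff hn0.ne', Finset.sum_add_distrib, Finset.sum_const,
      Finset.card_univ, Fintype.card_fin, nsmul_eq_mul, mul_comm]
  rw [hstep1]
  -- sum equality iff termwise
  have hstep2 : (∑ i, ((2 - μ i) ^ (p / 2) + (2 + μ i) ^ (p / 2))) =
      (∑ _i : Fin n, (4 : ℝ) ^ (p / 2)) ↔ ∀ i, μ i ^ 2 = 4 := by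
    rcases lt_or_gt_of_ne hq1 with hlt | hgt
    · rw [eq_comm, Finset.sum_eq_sum_iff_of_le
        (fun i _ => pair_ge_of_lt_one hq hlt (ha_nonneg i) (hb_nonneg i))]
      constructor
      · intro h i
        exact (pair_iff_sq hq hq1 (ha_nonneg i) (hb_nonneg i)).mp ((h i (Finset.mem_univ i)).symm)
      · intro h i _
        exact ((pair_iff_sq hq hq1 (ha_nonneg i) (hb_nonneg i)).mpr (h i)).symm
    · rw [Finset.sum_eq_sum_iff_of_le
        (fun i _ => pair_le_of_gt_one hgt (ha_nonneg i) (hb_nonneg i))]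
      constructor
      · intro h i
        exact (pair_iff_sq hq hq1 (ha_nonneg i) (hb_nonneg i)).mp (h i (Finset.mem_univ i))
      · intro h i _
        exact (pair_iff_sq hq hq1 (ha_nonneg i) (hb_nonneg i)).mpr (h i)
  rw [hstep2]
  -- eigenvalue condition iff H² = 4 iff Hermitian
  have hfinal : (∀ i, μ i ^ 2 = 4) ↔ Uᴴ = U := by
    rw [← herm_iff_sq U hU1 hU2, ← hHdef]
    constructor
    · intro h
      have hDD : Matrix.diagonal (fun i => (μ i : ℂ)) * Matrix.diagonal (fun i => (μ i : ℂ)) =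
          (4 : Matrix (Fin n) (Fin n) ℂ) := by
        rw [Matrix.diagonal_mul_diagonal]
        rw [show (fun i => (μ i : ℂ) * (μ i : ℂ)) = fun _ => (4 : ℂ) by
          funext i
          have := h i
          push_cast
          rw [show ((μ i : ℂ) * (μ i : ℂ)) = ((μ i : ℂ)) ^ 2 by ring]
          rw [show ((μ i : ℂ)) ^ 2 = (((μ i ^ 2 : ℝ)) : ℂ) by push_cast; ring, this]
          norm_num]
        rw [Matrix.diagonal_ofNat]
      calc H * H = (W : Matrix (Fin n) (Fin n) ℂ) * Matrix.diagonal (fun i => (μ i : ℂ)) *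
            (star (W : Matrix (Fin n) (Fin n) ℂ) * (W : Matrix (Fin n) (Fin n) ℂ)) *
            Matrix.diagonal (fun i => (μ i : ℂ)) * star (W : Matrix (Fin n) (Fin n) ℂ) := by
            rw [hspec]; noncomm_ring
      _ = (W : Matrix (Fin n) (Fin n) ℂ) * (Matrix.diagonal (fun i => (μ i : ℂ)) *
            Matrix.diagonal (fun i => (μ i : ℂ))) * star (W : Matrix (Fin n) (Fin n) ℂ) := by
            rw [hWW']; noncomm_ring
      _ = (W : Matrix (Fin n) (Fin n) ℂ) * (4 : Matrix (Fin n) (Fin n) ℂ) *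
            star (W : Matrix (Fin n) (Fin n) ℂ) := by rw [hDD]
      _ = 4 * ((W : Matrix (Fin n) (Fin n) ℂ) * star (W : Matrix (Fin n) (Fin n) ℂ)) := by
            noncomm_ring
      _ = 4 := by rw [hWW, mul_one]
    · intro hHH i
      have hD : Matrix.diagonal (fun i => (μ i : ℂ)) =
          star (W : Matrix (Fin n) (Fin n) ℂ) * H * (W : Matrix (Fin n) (Fin n) ℂ) := by
        rw [hspec]
        symm
        calc star (W : Matrix (Fin n) (Fin n) ℂ) * ((W : Matrix (Fin n) (Fin n) ℂ) *
              Matrix.diagonal (fun i => (μ i : ℂ)) * star (W : Matrix (Fin n) (Fin n) ℂ)) *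
              (W : Matrix (Fin n) (Fin n) ℂ) =
            (star (W : Matrix (Fin n) (Fin n) ℂ) * (W : Matrix (Fin n) (Fin n) ℂ)) *
              Matrix.diagonal (fun i => (μ i : ℂ)) *
              (star (W : Matrix (Fin n) (Fin n) ℂ) * (W : Matrix (Fin n) (Fin n) ℂ)) := by
              noncomm_ring
        _ = Matrix.diagonal (fun i => (μ i : ℂ)) := by rw [hWW']; noncomm_ring
      have hDD : Matrix.diagonal (fun i => (μ i : ℂ)) * Matrix.diagonal (fun i => (μ i : ℂ)) =
          (4 : Matrix (Fin n) (Fin n) ℂ) := by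
        rw [hD]
        calc (star (W : Matrix (Fin n) (Fin n) ℂ) * H * (W : Matrix (Fin n) (Fin n) ℂ)) *
              (star (W : Matrix (Fin n) (Fin n) ℂ) * H * (W : Matrix (Fin n) (Fin n) ℂ)) =
            star (W : Matrix (Fin n) (Fin n) ℂ) * H * ((W : Matrix (Fin n) (Fin n) ℂ) *
              star (W : Matrix (Fin n) (Fin n) ℂ)) * H * (W : Matrix (Fin n) (Fin n) ℂ) := by
              noncomm_ring
        _ = star (W : Matrix (Fin n) (Fin n) ℂ) * (H * H) * (W : Matrix (Fin n) (Fin n) ℂ) := by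
              rw [hWW]; noncomm_ring
        _ = star (W : Matrix (Fin n) (Fin n) ℂ) * (4 : Matrix (Fin n) (Fin n) ℂ) *
              (W : Matrix (Fin n) (Fin n) ℂ) := by rw [hHH]
        _ = 4 * (star (W : Matrix (Fin n) (Fin n) ℂ) * (W : Matrix (Fin n) (Fin n) ℂ)) := by
              noncomm_ring
        _ = 4 := by rw [hWW', mul_one]
      have := congrArg (fun M => M i i) hDD
      simp only [Matrix.diagonal_mul_diagonal, Matrix.diagonal_apply_eq] at this
      rw [← Matrix.diagonal_ofNat (m := 4), Matrix.diagonal_apply_eq] at this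
      have : ((μ i ^ 2 : ℝ) : ℂ) = ((4 : ℝ) : ℂ) := by push_cast at this ⊢; rw [← this]; ring
      exact_mod_cast this
  exact hfinal
end

section
/- Let n ≥ 1, p ∈ (0,∞), and let P, Q ∈ Mₙ(ℂ) be orthogonal projections (P = Pᴴ = P², Q = Qᴴ = Q²). Then P·Q = 0 if and only if ‖P − Q‖_p^p = τ(P) + τ(Q). -/
open Matrix
open scoped ComplexOrder

lemma herm_trace_eq' {m : Type*} [Fintype m] [DecidableEq m] {A : Matrix m m ℂ}
    (hA : A.IsHermitian) : A.trace = ∑ i, (hA.eigenvalues i : ℂ) := by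
  conv_lhs => rw [hA.spectral_theorem, Unitary.conjStarAlgAut_apply]
  rw [Matrix.trace_mul_cycle]
  simp [Matrix.trace_diagonal]

lemma herm_trace_re_eq {m : Type*} [Fintype m] [DecidableEq m] {A : Matrix m m ℂ}
    (hA : A.IsHermitian) : A.trace.re = ∑ i, hA.eigenvalues i := by
  rw [herm_trace_eq' hA, Complex.re_sum]
  simp

lemma herm_idem_eigs {m : Type*} [Fintype m] [DecidableEq m] {A : Matrix m m ℂ}
    (hA : A.IsHermitian) (h2 : A * A = A) (i : m) :
    hA.eigenvalues i = 0 ∨ hA.eigenvalues i = 1 := by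
  have hv := hA.mulVec_eigenvectorBasis i
  set t := hA.eigenvalues i with ht
  have hv2 : (A * A) *ᵥ ⇑(hA.eigenvectorBasis i) = (t * t) • ⇑(hA.eigenvectorBasis i) := by
    rw [← Matrix.mulVec_mulVec, hv, Matrix.mulVec_smul, hv, smul_smul]
  rw [h2, hv] at hv2
  have hvne : ⇑(hA.eigenvectorBasis i) ≠ 0 := by
    have := hA.eigenvectorBasis.orthonormal.ne_zero i
    intro h
    apply this
    ext j
    exact congrFun h j
  have htt : t * t = t := by
    by_contra h
    have : (t * t - t) • ⇑(hA.eigenvectorBasis i) = 0 := by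
      rw [sub_smul, hv2, sub_self]
    rcases smul_eq_zero.mp this with h' | h'
    · exact h (by linarith [sub_eq_zero.mp h'])
    · exact hvne h'
  exact eq_zero_or_one_of_sq_eq_self (by rw [sq, htt])

lemma eig_le_one {m : Type*} [Fintype m] [DecidableEq m] {A : Matrix m m ℂ}
    (hA : A.PosSemidef) (h1 : (1 - A).PosSemidef) (i : m) : hA.1.eigenvalues i ≤ 1 := by
  set v : m → ℂ := ⇑(hA.1.eigenvectorBasis i) with hvdef
  have hv : A *ᵥ v = hA.1.eigenvalues i • v := hA.1.mulVec_eigenvectorBasis i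
  have h := h1.re_dotProduct_nonneg v
  rw [Matrix.sub_mulVec, Matrix.one_mulVec, hv] at h
  have hsub : dotProduct (star v) (v - hA.1.eigenvalues i • v)
      = (1 - hA.1.eigenvalues i) • dotProduct (star v) v := by
    rw [dotProduct_sub, dotProduct_smul, sub_smul, one_smul]
  rw [hsub, RCLike.smul_re] at h
  have hpos : 0 < RCLike.re (dotProduct (star v) v) := by
    have hvne : v ≠ 0 := by
      have := hA.1.eigenvectorBasis.orthonormal.ne_zero i
      intro hzero; exact this (by ext j; exact congrFun hzero j)
    obtain ⟨j, hj⟩ := Function.ne_iff.mp hvne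
    have : RCLike.re (dotProduct (star v) v) = ∑ k, Complex.normSq (v k) := by
      simp only [dotProduct, Complex.re_sum, RCLike.re_to_complex, Pi.star_apply]
      refine Finset.sum_congr rfl fun k _ => ?_
      rw [Complex.star_def, ← Complex.normSq_eq_conj_mul_self]
      simp
    rw [this]
    exact Finset.sum_pos' (fun k _ => Complex.normSq_nonneg _)
      ⟨j, Finset.mem_univ j, by simpa using Complex.normSq_pos.mpr hj⟩
  nlinarith

lemma rank_sub_le_aux {m : Type*} [Fintype m] [DecidableEq m] (A B : Matrix m m ℂ) :
    (A - B).rank ≤ A.rank + B.rank := by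
  have hr : LinearMap.range (A - B).mulVecLin ≤
      LinearMap.range A.mulVecLin ⊔ LinearMap.range B.mulVecLin := by
    rintro y ⟨x, rfl⟩
    rw [Matrix.mulVecLin_apply, Matrix.sub_mulVec]
    exact Submodule.sub_mem _ (Submodule.mem_sup_left ⟨x, rfl⟩)
      (Submodule.mem_sup_right ⟨x, rfl⟩)
  calc (A - B).rank ≤ Module.finrank ℂ
        ↥(LinearMap.range A.mulVecLin ⊔ LinearMap.range B.mulVecLin) :=
        Submodule.finrank_mono hr
    _ ≤ A.rank + B.rank := Submodule.finrank_add_le_finrank_add_finrank _ _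

lemma herm_idem_trace_rank {m : Type*} [Fintype m] [DecidableEq m] {A : Matrix m m ℂ}
    (hA : A.IsHermitian) (heig : ∀ i, hA.eigenvalues i = 0 ∨ hA.eigenvalues i = 1) :
    A.trace.re = (A.rank : ℝ) := by
  classical
  rw [herm_trace_re_eq hA, hA.rank_eq_card_non_zero_eigs, Fintype.card_subtype]
  rw [← Finset.sum_boole]
  refine Finset.sum_congr rfl fun i _ => ?_
  rcases heig i with h | h <;> simp [h]

lemma eq_zero_of_trace_re_zero {m : Type*} [Fintype m] [DecidableEq m] {B : Matrix m m ℂ}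
    (h : (Matrix.trace (Bᴴ * B)).re = 0) : B = 0 := by
  have hexp : (Matrix.trace (Bᴴ * B)).re = ∑ i, ∑ j, Complex.normSq (B j i) := by
    rw [Matrix.trace, Complex.re_sum]
    refine Finset.sum_congr rfl fun i _ => ?_
    rw [Matrix.diag_apply, Matrix.mul_apply, Complex.re_sum]
    refine Finset.sum_congr rfl fun j _ => ?_
    rw [Matrix.conjTranspose_apply, Complex.star_def, ← Complex.normSq_eq_conj_mul_self]
    simp
  rw [hexp] at h
  have hall := (Finset.sum_eq_zero_iff_of_nonneg (fun i _ =>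
    Finset.sum_nonneg fun j _ => Complex.normSq_nonneg _)).mp h
  ext j i
  have := (Finset.sum_eq_zero_iff_of_nonneg (fun k _ => Complex.normSq_nonneg _)).mp
    (hall i (Finset.mem_univ i)) j (Finset.mem_univ j)
  simpa using Complex.normSq_eq_zero.mp this


/-- For projections `P, Q ∈ Mₙ(ℂ)`: `P·Q = 0` iff `‖P − Q‖_p^p = τ(P) + τ(Q)`. -/
theorem stmt6 (n : ℕ) (hn : 1 ≤ n) (p : ℝ) (hp : 0 < p)
    (P Q : Matrix (Fin n) (Fin n) ℂ)
    (hP : Pᴴ = P) (hP2 : P * P = P) (hQ : Qᴴ = Q) (hQ2 : Q * Q = Q) :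
    P * Q = 0 ↔ lpnorm p (P - Q) ^ p = P.trace.re / n + Q.trace.re / n := by
  classical
  have hn' : (0:ℝ) < n := by exact_mod_cast hn
  have hpsd := Matrix.posSemidef_conjTranspose_mul_self (P - Q)
  set t : Fin n → ℝ := hpsd.isHermitian.eigenvalues with htdef
  set S : ℝ := ∑ i, t i ^ (p / 2) with hSdef
  have ht0 : ∀ i, 0 ≤ t i := fun i => hpsd.eigenvalues_nonneg i
  have hS0 : 0 ≤ S := Finset.sum_nonneg fun i _ => Real.rpow_nonneg (ht0 i) _
  have hsubH : (P - Q)ᴴ = P - Q := by rw [Matrix.conjTranspose_sub, hP, hQ]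
  have hM2 : (P - Q)ᴴ * (P - Q) = P + Q - P*Q - Q*P := by
    rw [hsubH, Matrix.sub_mul, Matrix.mul_sub, Matrix.mul_sub, hP2, hQ2]
    abel
  -- trace of M
  have htrM : ((P - Q)ᴴ * (P - Q)).trace.re
      = P.trace.re + Q.trace.re - 2 * (P*Q).trace.re := by
    rw [hM2, Matrix.trace_sub, Matrix.trace_sub, Matrix.trace_add,
      Matrix.trace_mul_comm Q P]
    simp [Complex.sub_re, Complex.add_re]
    ring
  have hsumt : ∑ i, t i = ((P - Q)ᴴ * (P - Q)).trace.re :=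
    (herm_trace_re_eq hpsd.isHermitian).symm
  -- lpnorm computation
  have hlp : lpnorm p (P - Q) ^ p = S / n := by
    rw [lpnorm, Fintype.card_fin]
    rw [← Real.rpow_mul (div_nonneg hS0 hn'.le), one_div, inv_mul_cancel₀ hp.ne',
      Real.rpow_one]
  rw [hlp]
  have hred : S / (n:ℝ) = P.trace.re / n + Q.trace.re / n ↔ S = P.trace.re + Q.trace.re := by
    rw [← add_div, div_eq_div_iff hn'.ne' hn'.ne', mul_left_inj' hn'.ne']
  rw [hred]
  constructor
  · intro hPQ
    have hQP : Q * P = 0 := by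
      rw [← hP, ← hQ, ← Matrix.conjTranspose_mul, hPQ, Matrix.conjTranspose_zero]
    have hMPQ : (P - Q)ᴴ * (P - Q) = P + Q := by rw [hM2, hPQ, hQP]; simp
    have hMM : ((P - Q)ᴴ * (P - Q)) * ((P - Q)ᴴ * (P - Q)) = (P - Q)ᴴ * (P - Q) := by
      rw [hMPQ, Matrix.add_mul, Matrix.mul_add, Matrix.mul_add, hP2, hQ2, hPQ, hQP]
      simp
    have heig := herm_idem_eigs hpsd.isHermitian hMM
    have hSt : S = ∑ i, t i := by
      refine Finset.sum_congr rfl fun i _ => ?_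
      rcases heig i with h | h
      · rw [htdef, h, Real.zero_rpow (show p/2 ≠ 0 by positivity)]
      · rw [htdef, h, Real.one_rpow]
    rw [hSt, hsumt, hMPQ, Matrix.trace_add, Complex.add_re]
  · intro hS
    have h1psd : ((1 : Matrix (Fin n) (Fin n) ℂ) - (P - Q)ᴴ * (P - Q)).PosSemidef := by
      have hid : ((1 : Matrix (Fin n) (Fin n) ℂ) - P - Q)ᴴ * (1 - P - Q)
          = 1 - (P - Q)ᴴ * (P - Q) := by
        rw [Matrix.conjTranspose_sub, Matrix.conjTranspose_sub, Matrix.conjTranspose_one,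
          hP, hQ, hM2]
        have expand : ((1 : Matrix (Fin n) (Fin n) ℂ) - P - Q) * (1 - P - Q)
            = 1 - P - Q - P + P*P + P*Q - Q + Q*P + Q*Q := by noncomm_ring
        rw [expand, hP2, hQ2]
        abel
      rw [← hid]
      exact Matrix.posSemidef_conjTranspose_mul_self _
    have ht1 : ∀ i, t i ≤ 1 := fun i => eig_le_one hpsd h1psd i
    have hPher : P.IsHermitian := hP
    have hQher : Q.IsHermitian := hQ
    have htrP := herm_idem_trace_rank hPher (herm_idem_eigs hPher hP2)
    have htrQ := herm_idem_trace_rank hQher (herm_idem_eigs hQher hQ2)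
    have hfle : ∀ i, t i ^ (p/2) ≤ (if t i ≠ 0 then (1:ℝ) else 0) := by
      intro i
      by_cases h : t i = 0
      · simp [h, Real.zero_rpow (show p/2 ≠ 0 by positivity)]
      · simp only [h, ne_eq, not_false_eq_true, if_true]
        exact Real.rpow_le_one (ht0 i) (ht1 i) (by positivity)
    have hSabove : S ≤ ∑ i, (if t i ≠ 0 then (1:ℝ) else 0) :=
      Finset.sum_le_sum fun i _ => hfle i
    have hcard : ∑ i, (if t i ≠ 0 then (1:ℝ) else 0)
        = (((P - Q)ᴴ * (P - Q)).rank : ℝ) := by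
      rw [Finset.sum_boole, hpsd.isHermitian.rank_eq_card_non_zero_eigs,
        Fintype.card_subtype]
    have hrankle : ((((P - Q)ᴴ * (P - Q)).rank : ℕ) : ℝ) ≤ P.trace.re + Q.trace.re := by
      rw [htrP, htrQ]
      have h1 : ((P - Q)ᴴ * (P - Q)).rank = (P - Q).rank :=
        Matrix.rank_conjTranspose_mul_self _
      have h2 : (P - Q).rank ≤ P.rank + Q.rank := rank_sub_le_aux P Q
      exact_mod_cast h1 ▸ h2
    have hIF : ∑ i, (if t i ≠ 0 then (1:ℝ) else 0) = S := by
      refine le_antisymm ?_ hSabove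
      rw [hcard, hS]
      exact hrankle
    have hEq : ∀ i, t i ^ (p/2) = (if t i ≠ 0 then (1:ℝ) else 0) := by
      have hsum0 : ∑ i, ((if t i ≠ 0 then (1:ℝ) else 0) - t i ^ (p/2)) = 0 := by
        rw [Finset.sum_sub_distrib, hIF, hSdef, sub_self]
      intro i
      have := (Finset.sum_eq_zero_iff_of_nonneg
        (fun j _ => sub_nonneg.mpr (hfle j))).mp hsum0 i (Finset.mem_univ i)
      linarith [sub_eq_zero.mp this]
    have htt : ∀ i, t i ^ (p/2) = t i := by
      intro i
      by_cases h : t i = 0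
      · rw [h, Real.zero_rpow (show p/2 ≠ 0 by positivity)]
      · have h1 : t i ^ (p/2) = 1 := by rw [hEq i]; simp [h]
        have hone : t i = 1 := by
          rcases lt_trichotomy (t i) 1 with hlt | he | hgt
          · exfalso
            have := Real.rpow_lt_one (ht0 i) hlt (show (0:ℝ) < p/2 by positivity)
            linarith
          · exact he
          · exfalso
            have : (1:ℝ) < t i ^ (p/2) := (Real.one_lt_rpow_iff_of_pos (by linarith)).mpr
              (Or.inl ⟨hgt, by positivity⟩)
            linarith
        rw [hone, Real.one_rpow]
    have hsumtS : ∑ i, t i = S := by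
      rw [hSdef]
      exact (Finset.sum_congr rfl fun i _ => htt i).symm
    have htrPQ : (P*Q).trace.re = 0 := by
      have h1 := hsumt
      rw [htrM] at h1
      rw [hsumtS, hS] at h1
      linarith
    have hBB : ((P*Q)ᴴ * (P*Q)).trace = (P*Q).trace := by
      have h1 : (P*Q)ᴴ * (P*Q) = Q * (P * Q) := by
        rw [Matrix.conjTranspose_mul, hP, hQ, Matrix.mul_assoc,
          ← Matrix.mul_assoc P P Q, hP2]
      rw [h1, Matrix.trace_mul_comm, Matrix.mul_assoc, hQ2]
    exact eq_zero_of_trace_re_zero (by rw [hBB]; exact htrPQ)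
end

section
/- Let n ≥ 1 and β ∈ ℝ. Then there exist θ ∈ ℝ and self-adjoint unitary matrices U₁, …, U_{2n} ∈ M_{2ⁿ}(ℂ) such that e^{iβ}·E₁₁ + (I − E₁₁) = e^{iθ}·U₁·U₂·⋯·U_{2n}, i.e., the diagonal unitary diag(e^{iβ}, 1, …, 1) is e^{iθ} times a product of 2n self-adjoint unitaries. -/
open Matrix
open scoped ComplexOrder

namespace Stmt12

/-- pairing matrix: entries a i at positions (i, σ i). -/
def pm (N : ℕ) (σ : ℕ → ℕ) (a : ℕ → ℂ) : Matrix (Fin N) (Fin N) ℂ :=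
  Matrix.of fun i j => if (j : ℕ) = σ (i : ℕ) then a (i : ℕ) else 0

lemma pm_conjTranspose (N : ℕ) (σ : ℕ → ℕ) (a : ℕ → ℂ)
    (hσσ : ∀ k < N, σ (σ k) = k)
    (ha : ∀ k < N, a (σ k) = (starRingEnd ℂ) (a k)) :
    (pm N σ a)ᴴ = pm N σ a := by
  ext i j
  simp only [pm, Matrix.conjTranspose_apply, Matrix.of_apply]
  by_cases h : (i : ℕ) = σ (j : ℕ)
  · have hj : (j : ℕ) = σ (i : ℕ) := by rw [h, hσσ _ j.2]
    rw [if_pos h, if_pos hj, h, ha _ j.2]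
    rfl
  · have hj : ¬ ((j : ℕ) = σ (i : ℕ)) := fun hj => h (by rw [hj, hσσ _ i.2])
    rw [if_neg h, if_neg hj, star_zero]

lemma pm_mul_pm (N : ℕ) (σ : ℕ → ℕ) (a c : ℕ → ℂ)
    (hlt : ∀ k < N, σ k < N) (hσσ : ∀ k < N, σ (σ k) = k) :
    pm N σ a * pm N σ c =
      Matrix.diagonal (fun i : Fin N => a (i : ℕ) * c (σ (i : ℕ))) := by
  ext i j
  rw [Matrix.mul_apply]
  have hσi : σ (i : ℕ) < N := hlt _ i.2
  rw [Finset.sum_eq_single (⟨σ (i : ℕ), hσi⟩ : Fin N)]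
  · simp only [pm, Matrix.of_apply]
    rw [if_true, hσσ _ i.2]
    by_cases h : j = i
    · subst h
      rw [if_pos rfl, Matrix.diagonal_apply_eq]
    · rw [if_neg (by simpa [Fin.val_inj] using h), mul_zero,
        Matrix.diagonal_apply_ne _ (fun hh => h hh.symm)]
  · intro k _ hk
    simp only [pm, Matrix.of_apply]
    rw [if_neg, zero_mul]
    intro hkk
    exact hk (Fin.ext hkk)
  · intro h
    exact absurd (Finset.mem_univ _) h

lemma pm_mem (N : ℕ) (σ : ℕ → ℕ) (a : ℕ → ℂ)
    (hlt : ∀ k < N, σ k < N) (hσσ : ∀ k < N, σ (σ k) = k)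
    (ha : ∀ k < N, a (σ k) = (starRingEnd ℂ) (a k))
    (hu : ∀ k < N, a k * (starRingEnd ℂ) (a k) = 1) :
    pm N σ a ∈ Matrix.unitaryGroup (Fin N) ℂ := by
  rw [Matrix.mem_unitaryGroup_iff, Matrix.star_eq_conjTranspose,
    pm_conjTranspose N σ a hσσ ha, pm_mul_pm N σ a a hlt hσσ]
  have h1 : (fun i : Fin N => a (i : ℕ) * a (σ (i : ℕ))) = fun _ => 1 := by
    funext i
    rw [ha _ i.2]
    exact hu _ i.2
  rw [h1, Matrix.diagonal_one]


def sigA : ℕ → ℕ := fun k => if k % 2 = 0 then k + 1 else k - 1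

def tauB (N : ℕ) : ℕ → ℕ := fun k =>
  if k % 2 = 0 then (k + N - 1) % N else (k + 1) % N

def alA : ℕ → ℤ := fun k => if k % 2 = 0 then -(k : ℤ) else (k : ℤ) - 1

def gaB (N : ℕ) : ℕ → ℤ := fun k =>
  if k % 2 = 0 then (((k + N - 1) % N : ℕ) : ℤ) else -(k : ℤ)

noncomputable def aF (θ : ℝ) : ℕ → ℂ := fun k =>
  Complex.exp ((θ : ℂ) * Complex.I * (alA k : ℂ))

noncomputable def bF (N : ℕ) (θ : ℝ) : ℕ → ℂ := fun k =>
  Complex.exp ((θ : ℂ) * Complex.I * (gaB N k : ℂ))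

lemma exp_conj' (t : ℝ) (m : ℤ) :
    (starRingEnd ℂ) (Complex.exp ((t : ℂ) * Complex.I * (m : ℂ))) =
      Complex.exp (-((t : ℂ) * Complex.I * (m : ℂ))) := by
  rw [← Complex.exp_conj]
  congr 1
  simp only [_root_.map_mul, Complex.conj_ofReal, Complex.conj_I, map_intCast]
  ring

lemma exp_mul_conj (t : ℝ) (m : ℤ) :
    Complex.exp ((t : ℂ) * Complex.I * (m : ℂ)) *
      (starRingEnd ℂ) (Complex.exp ((t : ℂ) * Complex.I * (m : ℂ))) = 1 := by
  rw [exp_conj', ← Complex.exp_add, add_neg_cancel, Complex.exp_zero]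

lemma sig_lt (N : ℕ) (hN2 : N % 2 = 0) : ∀ k < N, sigA k < N := by
  intro k hk
  unfold sigA
  split_ifs <;> omega

lemma sig_sig : ∀ k, sigA (sigA k) = k := by
  intro k
  unfold sigA
  split_ifs <;> omega

lemma al_sig : ∀ k, alA (sigA k) = -(alA k) := by
  intro k
  unfold alA sigA
  split_ifs <;> omega

lemma aF_pair (θ : ℝ) : ∀ k, aF θ (sigA k) = (starRingEnd ℂ) (aF θ k) := by
  intro k
  unfold aF
  rw [al_sig k, exp_conj']
  congr 1
  push_cast
  ring

lemma modfact (N k : ℕ) (h0 : 0 < N) (hk : k < N) :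
    (k + N - 1) % N = if k = 0 then N - 1 else k - 1 := by
  by_cases h : k = 0
  · subst h
    rw [if_pos rfl, Nat.zero_add, Nat.mod_eq_of_lt (by omega)]
  · rw [if_neg h]
    have h1 : k + N - 1 = N + (k - 1) := by omega
    rw [h1, Nat.add_mod_left, Nat.mod_eq_of_lt (by omega)]

lemma modfact2 (N k : ℕ) (h0 : 0 < N) (hk : k < N) :
    (k + 1) % N = if k = N - 1 then 0 else k + 1 := by
  by_cases h : k = N - 1
  · rw [if_pos h, h]
    have h1 : N - 1 + 1 = N := by omega
    rw [h1, Nat.mod_self]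
  · rw [if_neg h, Nat.mod_eq_of_lt (by omega)]

lemma tau_lt (N : ℕ) (h0 : 0 < N) : ∀ k < N, tauB N k < N := by
  intro k _
  unfold tauB
  split_ifs <;> exact Nat.mod_lt _ h0

lemma tau_tau (N : ℕ) (h0 : 0 < N) (hN2 : N % 2 = 0) :
    ∀ k < N, tauB N (tauB N k) = k := by
  intro k hk
  by_cases he : k % 2 = 0
  · have h1 : tauB N k = if k = 0 then N - 1 else k - 1 := by
      unfold tauB
      rw [if_pos he, modfact N k h0 hk]
    by_cases h2 : k = 0
    · rw [h1, if_pos h2]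
      unfold tauB
      rw [if_neg (by omega)]
      have h3 : N - 1 + 1 = N := by omega
      rw [h3, Nat.mod_self, h2]
    · rw [h1, if_neg h2]
      unfold tauB
      rw [if_neg (by omega)]
      have h3 : k - 1 + 1 = k := by omega
      rw [h3, Nat.mod_eq_of_lt hk]
  · have h1 : tauB N k = if k = N - 1 then 0 else k + 1 := by
      unfold tauB
      rw [if_neg he, modfact2 N k h0 hk]
    by_cases h2 : k = N - 1
    · rw [h1, if_pos h2]
      unfold tauB
      rw [if_pos (by omega), modfact N 0 h0 h0, if_pos rfl]
      omega
    · rw [h1, if_neg h2]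
      unfold tauB
      rw [if_pos (by omega), modfact N (k + 1) h0 (by omega), if_neg (by omega)]
      omega

lemma gb_pair (N : ℕ) (h0 : 0 < N) (hN2 : N % 2 = 0) :
    ∀ k < N, gaB N (tauB N k) = -(gaB N k) := by
  intro k hk
  by_cases he : k % 2 = 0
  · have h1 : tauB N k = if k = 0 then N - 1 else k - 1 := by
      unfold tauB
      rw [if_pos he, modfact N k h0 hk]
    have h2 : gaB N k = ((if k = 0 then N - 1 else k - 1 : ℕ) : ℤ) := by
      unfold gaB
      rw [if_pos he, modfact N k h0 hk]
    have h3 : (tauB N k) % 2 = 1 := by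
      rw [h1]; split_ifs <;> omega
    have h4 : gaB N (tauB N k) = -((tauB N k : ℕ) : ℤ) := by
      unfold gaB
      rw [if_neg (by omega)]
    rw [h4, h2, h1]
  · have h1 : tauB N k = if k = N - 1 then 0 else k + 1 := by
      unfold tauB
      rw [if_neg he, modfact2 N k h0 hk]
    have h2 : gaB N k = -(k : ℤ) := by
      unfold gaB
      rw [if_neg he]
    have h3 : (tauB N k) % 2 = 0 := by
      rw [h1]; split_ifs <;> omega
    have h4 : gaB N (tauB N k) = (((tauB N k + N - 1) % N : ℕ) : ℤ) := by
      unfold gaB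
      rw [if_pos h3]
    by_cases h5 : k = N - 1
    · rw [h4, modfact N (tauB N k) h0 (tau_lt N h0 k hk), h1, h2, if_pos h5, if_pos rfl]
      omega
    · rw [h4, modfact N (tauB N k) h0 (tau_lt N h0 k hk), h1, h2, if_neg h5, if_neg (by omega)]
      omega

lemma bF_pair (N : ℕ) (h0 : 0 < N) (hN2 : N % 2 = 0) (θ : ℝ) :
    ∀ k < N, bF N θ (tauB N k) = (starRingEnd ℂ) (bF N θ k) := by
  intro k hk
  unfold bF
  rw [gb_pair N h0 hN2 k hk, exp_conj']
  congr 1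
  push_cast
  ring

lemma gam_al (N : ℕ) (h0 : 0 < N) (k : ℕ) (hk : k < N) (hk0 : k ≠ 0) :
    1 + gaB N k + alA k = 0 := by
  by_cases he : k % 2 = 0
  · unfold gaB alA
    rw [if_pos he, if_pos he, modfact N k h0 hk, if_neg hk0]
    omega
  · unfold gaB alA
    rw [if_neg he, if_neg he]
    omega

def pick {M : Type*} [One M] (w x y z : M) : ℕ → M := fun j =>
  if j = 0 then w else if j = 1 then x else if j = 2 then y else if j = 3 then z else 1

lemma pick_ge {M : Type*} [One M] (w x y z : M) (j : ℕ) (hj : 4 ≤ j) :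
    pick w x y z j = 1 := by
  unfold pick
  rw [if_neg (by omega), if_neg (by omega), if_neg (by omega), if_neg (by omega)]

lemma pick_two {M : Type*} [Monoid M] (w x y z : M) :
    (List.ofFn fun i : Fin 2 => pick w x y z (i : ℕ)).prod = w * x := by
  simp [List.ofFn_succ, pick]

lemma pick_big {M : Type*} [Monoid M] (w x y z : M) :
    ∀ k, 4 ≤ k → (List.ofFn fun i : Fin k => pick w x y z (i : ℕ)).prod = w * x * (y * z) := by
  intro k
  induction k with
  | zero => omega
  | succ m ih =>
    intro hm
    rcases Nat.lt_or_ge m 4 with h4 | h4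
    · have hm4 : m = 3 := by omega
      subst hm4
      simp [List.ofFn_succ, pick, mul_assoc]
    · rw [List.ofFn_succ', List.prod_concat]
      have he : (fun i : Fin m => pick w x y z ((Fin.castSucc i : Fin (m + 1)) : ℕ)) =
          fun i : Fin m => pick w x y z (i : ℕ) := rfl
      rw [show ((Fin.last m : Fin (m + 1)) : ℕ) = m from rfl, pick_ge w x y z m h4, mul_one]
      exact ih h4

lemma pick_prod {M : Type*} [Monoid M] (w x y z : M) (k : ℕ)
    (hk : k = 2 ∨ 4 ≤ k) (h2 : k = 2 → y * z = 1) :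
    (List.ofFn fun i : Fin k => pick w x y z (i : ℕ)).prod = w * x * (y * z) := by
  rcases hk with rfl | hk
  · rw [h2 rfl, mul_one]
    exact pick_two w x y z
  · exact pick_big w x y z k hk


theorem key (N : ℕ) (h0 : 0 < N) (hN2 : N % 2 = 0) (β : ℝ) (m : ℕ)
    (hm : m = 2 ∨ 4 ≤ m) (hm2 : m = 2 → N = 2) :
    ∃ (θ : ℝ) (U : Fin m → Matrix (Fin N) (Fin N) ℂ),
      (∀ i, U i ∈ Matrix.unitaryGroup (Fin N) ℂ ∧ (U i)ᴴ = U i) ∧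
      Complex.exp (β * Complex.I) •
          Matrix.single (⟨0, h0⟩ : Fin N) (⟨0, h0⟩ : Fin N) (1 : ℂ) +
        (1 - Matrix.single (⟨0, h0⟩ : Fin N) (⟨0, h0⟩ : Fin N) (1 : ℂ)) =
      Complex.exp (θ * Complex.I) • (List.ofFn U).prod := by
  set θ : ℝ := β / (N : ℝ) with hθ
  have hNne : (N : ℂ) ≠ 0 := Nat.cast_ne_zero.mpr (by omega)
  have hσlt := sig_lt N hN2
  have hσσ : ∀ k < N, sigA (sigA k) = k := fun k _ => sig_sig k
  have hτlt := tau_lt N h0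
  have hττ := tau_tau N h0 hN2
  have haσ : ∀ k < N, aF θ (sigA k) = (starRingEnd ℂ) (aF θ k) := fun k _ => aF_pair θ k
  have hbτ := bF_pair N h0 hN2 θ
  have h1σ : ∀ k < N, (fun _ : ℕ => (1:ℂ)) (sigA k) = (starRingEnd ℂ) ((fun _ : ℕ => (1:ℂ)) k) := by
    simp
  have h1τ : ∀ k < N, (fun _ : ℕ => (1:ℂ)) (tauB N k) =
      (starRingEnd ℂ) ((fun _ : ℕ => (1:ℂ)) k) := by simp
  have hau : ∀ k < N, aF θ k * (starRingEnd ℂ) (aF θ k) = 1 := fun k _ => exp_mul_conj θ (alA k)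
  have hbu : ∀ k < N, bF N θ k * (starRingEnd ℂ) (bF N θ k) = 1 := fun k _ =>
    exp_mul_conj θ (gaB N k)
  have h1u : ∀ k < N, (fun _ : ℕ => (1:ℂ)) k * (starRingEnd ℂ) ((fun _ : ℕ => (1:ℂ)) k) = 1 := by
    simp
  have htgt : Complex.exp (β * Complex.I) •
          Matrix.single (⟨0, h0⟩ : Fin N) (⟨0, h0⟩ : Fin N) (1 : ℂ) +
        (1 - Matrix.single (⟨0, h0⟩ : Fin N) (⟨0, h0⟩ : Fin N) (1 : ℂ)) =
      Matrix.diagonal (fun i : Fin N =>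
        if (i : ℕ) = 0 then Complex.exp (β * Complex.I) else 1) := by
    ext i j
    by_cases hij : i = j
    · subst hij
      by_cases hi : i = (⟨0, h0⟩ : Fin N)
      · subst hi
        simp [Matrix.single, Matrix.one_apply]
      · have hiv : ¬((i : ℕ) = 0) := fun h => hi (Fin.ext h)
        have hcond : ¬((⟨0, h0⟩ : Fin N) = i ∧ (⟨0, h0⟩ : Fin N) = i) := by
          intro h
          exact hi h.1.symm
        have hi' : ¬((⟨0, h0⟩ : Fin N) = i) := fun h => hi h.symm
        simp [Matrix.single, Matrix.one_apply, hcond, hiv, hi']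
    · have hcond : ¬((⟨0, h0⟩ : Fin N) = i ∧ (⟨0, h0⟩ : Fin N) = j) := by
        rintro ⟨h1, h2⟩
        exact hij (h1 ▸ h2 ▸ rfl)
      simp [Matrix.single, Matrix.one_apply, hcond, hij,
        Matrix.diagonal_apply_ne _ hij]
  refine ⟨θ, fun i => pick (pm N (tauB N) (bF N θ)) (pm N (tauB N) fun _ => 1)
      (pm N sigA (aF θ)) (pm N sigA fun _ => 1) (i : ℕ), ?_, ?_⟩
  · intro i
    unfold pick
    dsimp only
    split_ifs
    · exact ⟨pm_mem N _ _ hτlt hττ hbτ hbu, pm_conjTranspose N _ _ hττ hbτ⟩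
    · exact ⟨pm_mem N _ _ hτlt hττ h1τ h1u, pm_conjTranspose N _ _ hττ h1τ⟩
    · exact ⟨pm_mem N _ _ hσlt hσσ haσ hau, pm_conjTranspose N _ _ hσσ haσ⟩
    · exact ⟨pm_mem N _ _ hσlt hσσ h1σ h1u, pm_conjTranspose N _ _ hσσ h1σ⟩
    · exact ⟨by rw [Matrix.mem_unitaryGroup_iff]; simp, Matrix.conjTranspose_one⟩
  · rw [pick_prod _ _ _ _ m hm ?h2]
    case h2 =>
      intro hm'
      have hNN : N = 2 := hm2 hm'
      rw [pm_mul_pm N sigA (aF θ) (fun _ => 1) hσlt hσσ]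
      have hfun : (fun i : Fin N => aF θ (i : ℕ) * (fun _ : ℕ => (1:ℂ)) (sigA (i : ℕ))) =
          fun _ => 1 := by
        funext i
        have hi := i.isLt
        have h2' : (i : ℕ) = 0 ∨ (i : ℕ) = 1 := by omega
        have hA : alA (i : ℕ) = 0 := by
          unfold alA
          rcases h2' with h | h <;> rw [h] <;> norm_num
        simp [aF, hA]
      rw [hfun, Matrix.diagonal_one]
    rw [htgt, pm_mul_pm N (tauB N) (bF N θ) (fun _ => 1) hτlt hττ,
      pm_mul_pm N sigA (aF θ) (fun _ => 1) hσlt hσσ, Matrix.diagonal_mul_diagonal]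
    ext i j
    by_cases hij : i = j
    · subst hij
      simp only [Matrix.diagonal_apply_eq, Matrix.smul_apply, Pi.mul_apply, mul_one,
        smul_eq_mul]
      unfold aF bF
      rw [← Complex.exp_add, ← Complex.exp_add]
      by_cases hi : (i : ℕ) = 0
      · rw [if_pos hi, hi]
        have hg : gaB N 0 = (N : ℤ) - 1 := by
          unfold gaB
          rw [if_pos (by norm_num), show 0 + N - 1 = N - 1 from by omega,
            Nat.mod_eq_of_lt (by omega)]
          omega
        have ha0 : alA 0 = 0 := by unfold alA; norm_num
        rw [hg, ha0]
        have hθN : (θ : ℂ) * (N : ℂ) = (β : ℂ) := by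
          rw [hθ]
          push_cast
          field_simp
        congr 1
        push_cast
        linear_combination (-Complex.I) * hθN
      · rw [if_neg hi, ← Complex.exp_zero]
        congr 1
        have hz : 1 + gaB N (i : ℕ) + alA (i : ℕ) = 0 := gam_al N h0 _ i.isLt hi
        have hzc : ((1 + gaB N (i : ℕ) + alA (i : ℕ) : ℤ) : ℂ) = 0 := by rw [hz]; norm_num
        push_cast at hzc
        linear_combination (-(θ : ℂ)) * Complex.I * hzc
    · simp [Matrix.diagonal_apply_ne _ hij, Matrix.smul_apply]

end Stmt12

/-- `diag(e^{iβ}, 1, …, 1) ∈ M_{2ⁿ}(ℂ)` is `e^{iθ}` times a product of `2n`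
self-adjoint unitaries. -/
theorem stmt12 (n : ℕ) (hn : 1 ≤ n) (β : ℝ) :
    ∃ (θ : ℝ) (U : Fin (2 * n) → Matrix (Fin (2 ^ n)) (Fin (2 ^ n)) ℂ),
      (∀ i, U i ∈ Matrix.unitaryGroup (Fin (2 ^ n)) ℂ ∧ (U i)ᴴ = U i) ∧
      Complex.exp (β * Complex.I) •
          Matrix.single (⟨0, by positivity⟩ : Fin (2 ^ n))
            (⟨0, by positivity⟩ : Fin (2 ^ n)) (1 : ℂ) +
        (1 - Matrix.single (⟨0, by positivity⟩ : Fin (2 ^ n))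
            (⟨0, by positivity⟩ : Fin (2 ^ n)) (1 : ℂ)) =
      Complex.exp (θ * Complex.I) • (List.ofFn U).prod := by
  have h0 : (0 : ℕ) < 2 ^ n := by positivity
  have hmod : (2 : ℕ) ^ n % 2 = 0 := by
    obtain ⟨p, rfl⟩ : ∃ p, n = p + 1 := ⟨n - 1, by omega⟩
    rw [pow_succ]
    exact Nat.mul_mod_left _ 2
  have hm2 : 2 * n = 2 → (2 : ℕ) ^ n = 2 := by
    intro h
    have hn1 : n = 1 := by omega
    subst hn1
    norm_num
  exact Stmt12.key (2 ^ n) h0 hmod β (2 * n) (by omega) hm2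
end

section
/- Let f : ℝ → ℝ be defined by f(x) = (1 − 2x)/(1 − x). Then: (i) for every x ∈ (1/3, 1/2), x − f(f(x)) = x + 1/x − 3, which is positive for x ∈ (1/3, (3 − √5)/2) and negative for x ∈ ((3 − √5)/2, 1/2); (ii) the only fixed point of f in the interval (1/3, 1/2) is (3 − √5)/2; (iii) for every c ∈ (1/3, 1/2) with c ≠ (3 − √5)/2, there exists n ∈ ℕ such that the n-fold iterate f^[n](c) does not lie in (1/3, 1/2). -/
set_option maxHeartbeats 1000000


/-- Properties of `f(x) = (1 − 2x)/(1 − x)` on `(1/3, 1/2)`: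
(i) `x − f(f(x)) = x + 1/x − 3`, which is positive on `(1/3, (3 − √5)/2)` and negative
on `((3 − √5)/2, 1/2)`; (ii) the only fixed point of `f` in `(1/3, 1/2)` is
`(3 − √5)/2`; (iii) if `c ∈ (1/3, 1/2)` and `c ≠ (3 − √5)/2` then some iterate
`f^[n](c)` leaves `(1/3, 1/2)`. -/
theorem stmt18 (f : ℝ → ℝ) (hf : ∀ x : ℝ, f x = (1 - 2 * x) / (1 - x)) :
    (∀ x ∈ Set.Ioo (1 / 3 : ℝ) (1 / 2), x - f (f x) = x + 1 / x - 3) ∧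
    (∀ x ∈ Set.Ioo (1 / 3 : ℝ) ((3 - Real.sqrt 5) / 2), 0 < x - f (f x)) ∧
    (∀ x ∈ Set.Ioo ((3 - Real.sqrt 5) / 2) (1 / 2 : ℝ), x - f (f x) < 0) ∧
    (∀ x ∈ Set.Ioo (1 / 3 : ℝ) (1 / 2), (f x = x ↔ x = (3 - Real.sqrt 5) / 2)) ∧
    (∀ c ∈ Set.Ioo (1 / 3 : ℝ) (1 / 2), c ≠ (3 - Real.sqrt 5) / 2 →
      ∃ n : ℕ, f^[n] c ∉ Set.Ioo (1 / 3 : ℝ) (1 / 2)) := by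
  have hs2 : Real.sqrt 5 ^ 2 = 5 := Real.sq_sqrt (by norm_num)
  set s := Real.sqrt 5 with hs
  have hs0 : 0 ≤ s := Real.sqrt_nonneg 5
  have hsl : 2 < s := by nlinarith
  have hsu : s < 7/3 := by nlinarith
  have ha1 : (1/3:ℝ) < (3 - s)/2 := by linarith
  have ha2 : (3 - s)/2 < 1/2 := by linarith
  -- key computation
  have key : ∀ x ∈ Set.Ioo (1/3:ℝ) (1/2), f (f x) = 3 - 1/x := by
    rintro x ⟨hx1, hx2⟩
    have h0 : x ≠ 0 := ne_of_gt (by linarith)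
    have h1 : (1:ℝ) - x ≠ 0 := ne_of_gt (by linarith)
    have h1t : 1 - f x = x/(1-x) := by rw [hf x]; field_simp; ring
    have hne : 1 - f x ≠ 0 := by rw [h1t]; exact div_ne_zero h0 h1
    rw [hf (f x), div_eq_iff hne, h1t, hf x]
    field_simp
    ring
  have part1 : ∀ x ∈ Set.Ioo (1/3:ℝ) (1/2), x - f (f x) = x + 1/x - 3 := by
    intro x hx; rw [key x hx]; ring
  have part2 : ∀ x ∈ Set.Ioo (1/3:ℝ) ((3 - s)/2), 0 < x - f (f x) := by
    rintro x ⟨hx1, hx2⟩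
    have hx3 : x < 1/2 := lt_trans hx2 ha2
    have hx0 : (0:ℝ) < x := by linarith
    rw [part1 x ⟨hx1, hx3⟩]
    have hq : 0 < x^2 - 3*x + 1 := by nlinarith [sq_nonneg (3 - 2*x - s)]
    have heq : x + 1/x - 3 = (x^2 - 3*x + 1)/x := by field_simp; ring
    rw [heq]; exact div_pos hq hx0
  have part3 : ∀ x ∈ Set.Ioo ((3 - s)/2) (1/2:ℝ), x - f (f x) < 0 := by
    rintro x ⟨hx1, hx2⟩
    have hx0 : (0:ℝ) < x := by linarith
    have hx1' : (1/3:ℝ) < x := lt_trans ha1 hx1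
    rw [part1 x ⟨hx1', hx2⟩]
    have hq : x^2 - 3*x + 1 < 0 := by
      nlinarith [mul_pos (show (0:ℝ) < s - (3 - 2*x) by linarith)
        (show (0:ℝ) < s + (3 - 2*x) by linarith)]
    have heq : x + 1/x - 3 = (x^2 - 3*x + 1)/x := by field_simp; ring
    rw [heq]; exact div_neg_of_neg_of_pos hq hx0
  have part4 : ∀ x ∈ Set.Ioo (1/3:ℝ) (1/2), (f x = x ↔ x = (3 - s)/2) := by
    rintro x ⟨hx1, hx2⟩
    constructor
    · intro h
      rw [hf x, div_eq_iff (show (1:ℝ) - x ≠ 0 from ne_of_gt (by linarith))] at h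
      have hq : (3 - 2*x)^2 = 5 := by nlinarith
      have hx' : s = 3 - 2*x := by
        rw [hs, show (5:ℝ) = (3 - 2*x)^2 from hq.symm, Real.sqrt_sq (by linarith)]
      linarith
    · intro h
      rw [h, hf]
      rw [div_eq_iff (show (1:ℝ) - (3 - s)/2 ≠ 0 from ne_of_gt (by linarith))]
      linear_combination hs2/4
  refine ⟨part1, part2, part3, part4, ?_⟩
  intro c hc hcne
  by_contra hall
  push_neg at hall
  have hmem : ∀ n, f^[2*n] c ∈ Set.Ioo (1/3:ℝ) (1/2) := fun n => hall (2*n)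
  have hc0 : (0:ℝ) < c := by linarith [hc.1]
  have hiter : ∀ n, f^[2*(n+1)] c = f^[2*n] c - (f^[2*n] c + 1/(f^[2*n] c) - 3) := by
    intro n
    have h1 : f^[2*(n+1)] c = f (f (f^[2*n] c)) := by
      rw [show 2*(n+1) = 2 + 2*n by ring, Function.iterate_add_apply]
      rfl
    rw [h1, key _ (hmem n)]; ring
  rcases lt_or_gt_of_ne hcne with hlt | hgt
  · -- c < α : even iterates decrease by δ each time
    have hδ : 0 < c + 1/c - 3 := by
      have e := part1 c hc
      have p := part2 c ⟨hc.1, hlt⟩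
      linarith
    have hstep : ∀ n : ℕ, f^[2*n] c ≤ c - n * (c + 1/c - 3) := by
      intro n; induction n with
      | zero => simp
      | succ n ih =>
        have hymem := hmem n
        have hnn : (0:ℝ) ≤ (n:ℝ) * (c + 1/c - 3) :=
          mul_nonneg (Nat.cast_nonneg n) hδ.le
        have hyc : f^[2*n] c ≤ c := by linarith
        have hy0 : (0:ℝ) < f^[2*n] c := by linarith [hymem.1]
        have hkey : c + 1/c - 3 ≤ f^[2*n] c + 1/(f^[2*n] c) - 3 := by
          have h : f^[2*n] c + 1/(f^[2*n] c) - (c + 1/c)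
              = (c - f^[2*n] c)*(1 - c*(f^[2*n] c))/(c*(f^[2*n] c)) := by
            field_simp; ring
          have hpos : 0 ≤ (c - f^[2*n] c)*(1 - c*(f^[2*n] c))/(c*(f^[2*n] c)) := by
            apply div_nonneg
            · apply mul_nonneg
              · linarith
              · nlinarith [hc.2, hymem.2]
            · positivity
          linarith [h ▸ hpos]
        rw [hiter n]
        push_cast
        linarith
    obtain ⟨n, hn⟩ := exists_nat_gt ((c - 1/3)/(c + 1/c - 3))
    rw [div_lt_iff₀ hδ] at hn
    linarith [hstep n, (hmem n).1]
  · -- c > α : even iterates increase by δ' each time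
    have hδ : c + 1/c - 3 < 0 := by
      have e := part1 c hc
      have p := part3 c ⟨hgt, hc.2⟩
      linarith
    have hstep : ∀ n : ℕ, c + n * (3 - c - 1/c) ≤ f^[2*n] c := by
      intro n; induction n with
      | zero => simp
      | succ n ih =>
        have hymem := hmem n
        have hnn : (0:ℝ) ≤ (n:ℝ) * (3 - c - 1/c) :=
          mul_nonneg (Nat.cast_nonneg n) (by linarith)
        have hyc : c ≤ f^[2*n] c := by linarith
        have hy0 : (0:ℝ) < f^[2*n] c := by linarith [hymem.1]
        have hkey : f^[2*n] c + 1/(f^[2*n] c) - 3 ≤ c + 1/c - 3 := by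
          have h : f^[2*n] c + 1/(f^[2*n] c) - (c + 1/c)
              = (c - f^[2*n] c)*(1 - c*(f^[2*n] c))/(c*(f^[2*n] c)) := by
            field_simp; ring
          have hneg : (c - f^[2*n] c)*(1 - c*(f^[2*n] c))/(c*(f^[2*n] c)) ≤ 0 := by
            apply div_nonpos_of_nonpos_of_nonneg
            · apply mul_nonpos_of_nonpos_of_nonneg
              · linarith
              · nlinarith [hc.2, hymem.2]
            · positivity
          linarith [h ▸ hneg]
        rw [hiter n]
        push_cast
        linarith
    obtain ⟨n, hn⟩ := exists_nat_gt ((1/2 - c)/(3 - c - 1/c))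
    rw [div_lt_iff₀ (by linarith)] at hn
    linarith [hstep n, (hmem n).2]
end

section
/- Let n ≥ 1, let H ∈ Mₙ(ℂ) be positive semidefinite with H ≤ I (i.e., I − H is also positive semidefinite), and let W₀ ∈ Mₙ(ℂ) be unitary. Let K be the positive semidefinite square root of H(I − H), set W := (1/√2)·fromBlocks(I, i·W₀, −i·I, −W₀) ∈ M_{2n}(ℂ) and V₀ := −2K − i·(I − 2H) ∈ Mₙ(ℂ). Then: (i) W is unitary; (ii) V₀ is unitary; (iii) fromBlocks(H, K·W₀, W₀ᴴ·K, W₀ᴴ·(I − H)·W₀) = (1/2)·Wᴴ·fromBlocks(I, V₀, V₀ᴴ, I)·W. -/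
open Matrix
open scoped ComplexOrder

/-- If a matrix commutes with the square of a positive semidefinite matrix, it
commutes with the matrix itself. -/
lemma commute_of_commute_sq {n : ℕ} {H K : Matrix (Fin n) (Fin n) ℂ}
    (hK : K.PosSemidef) (hcomm : H * (K * K) = (K * K) * H) :
    H * K = K * H := by
  have hKh := hK.1
  set U : Matrix (Fin n) (Fin n) ℂ := (hKh.eigenvectorUnitary : Matrix (Fin n) (Fin n) ℂ) with hU
  set d : Fin n → ℝ := hKh.eigenvalues with hd
  have hd0 : ∀ i, 0 ≤ d i := hK.eigenvalues_nonneg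
  have hUU : star U * U = 1 := mem_unitaryGroup_iff'.mp hKh.eigenvectorUnitary.2
  have hUU' : U * star U = 1 := mem_unitaryGroup_iff.mp hKh.eigenvectorUnitary.2
  have hUU2 : ∀ X : Matrix (Fin n) (Fin n) ℂ, star U * (U * X) = X := fun X => by
    rw [← Matrix.mul_assoc, hUU, Matrix.one_mul]
  have hUU'2 : ∀ X : Matrix (Fin n) (Fin n) ℂ, U * (star U * X) = X := fun X => by
    rw [← Matrix.mul_assoc, hUU', Matrix.one_mul]
  have hspec : K = U * diagonal (RCLike.ofReal ∘ d) * star U := hKh.spectral_theorem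
  set D : Matrix (Fin n) (Fin n) ℂ := diagonal (RCLike.ofReal ∘ d) with hD
  have hcomm' : (star U * H * U) * (D * D) = (D * D) * (star U * H * U) := by
    have h2 := congrArg (fun M => star U * M * U) hcomm
    rw [hspec] at h2
    simp only [Matrix.mul_assoc, hUU2, hUU'2, hUU, hUU', Matrix.mul_one] at h2
    simp only [Matrix.mul_assoc]
    exact h2
  have hentry : ∀ i j, (star U * H * U) i j * (RCLike.ofReal ∘ d) j
      = (RCLike.ofReal ∘ d) i * (star U * H * U) i j := by
    intro i j
    have h3 := congrFun (congrFun hcomm' i) j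
    rw [hD, diagonal_mul_diagonal, Matrix.mul_diagonal, Matrix.diagonal_mul] at h3
    rcases eq_or_ne ((star U * H * U) i j) 0 with h0 | h0
    · simp [h0]
    · have hdj : ((d j : ℂ)) * (d j : ℂ) = (d i : ℂ) * (d i : ℂ) := by
        have h4 : (star U * H * U) i j * ((d j : ℂ) * (d j : ℂ))
            = (star U * H * U) i j * ((d i : ℂ) * (d i : ℂ)) := by
          simpa [Function.comp, mul_comm, mul_left_comm, mul_assoc] using h3
        exact mul_left_cancel₀ h0 h4
      have h5 : d j * d j = d i * d i := by exact_mod_cast hdj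
      have hdji : d j = d i := by
        have := congrArg Real.sqrt h5
        rwa [Real.sqrt_mul_self (hd0 j), Real.sqrt_mul_self (hd0 i)] at this
      simp [Function.comp, hdji, mul_comm]
  have hmul : (star U * H * U) * D = D * (star U * H * U) := by
    ext i j
    rw [hD, Matrix.mul_diagonal, Matrix.diagonal_mul]
    exact hentry i j
  calc H * K = H * (U * D * star U) := by rw [← hspec]
    _ = U * ((star U * H * U) * D) * star U := by
        simp only [Matrix.mul_assoc, hUU'2]
    _ = U * (D * (star U * H * U)) * star U := by rw [hmul]
    _ = K * H := by
        rw [hspec]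
        simp only [Matrix.mul_assoc, hUU2, hUU', Matrix.mul_one]

/-- Let `0 ≤ H ≤ I` in `Mₙ(ℂ)`, `W₀` unitary, `K` the positive semidefinite square
root of `H(I − H)`, `W := (1/√2)·fromBlocks I (iW₀) (−iI) (−W₀)` and
`V₀ := −2K − i(I − 2H)`. Then `W` and `V₀` are unitary, and
`fromBlocks H (KW₀) (W₀ᴴK) (W₀ᴴ(I − H)W₀) = (1/2)·Wᴴ·fromBlocks I V₀ V₀ᴴ I·W`. -/
theorem stmt19 (n : ℕ) (hn : 1 ≤ n) (H K W₀ : Matrix (Fin n) (Fin n) ℂ)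
    (hH : H.PosSemidef) (hH1 : (1 - H).PosSemidef)
    (hW₀ : W₀ ∈ Matrix.unitaryGroup (Fin n) ℂ)
    (hK : K.PosSemidef) (hKsq : K * K = H * (1 - H)) :
    ((Real.sqrt 2 : ℂ))⁻¹ •
        Matrix.fromBlocks 1 (Complex.I • W₀) (-(Complex.I • (1 : Matrix (Fin n) (Fin n) ℂ)))
          (-W₀) ∈ Matrix.unitaryGroup (Fin n ⊕ Fin n) ℂ ∧
    -((2 : ℂ) • K) - Complex.I • (1 - (2 : ℂ) • H) ∈ Matrix.unitaryGroup (Fin n) ℂ ∧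
    Matrix.fromBlocks H (K * W₀) (W₀ᴴ * K) (W₀ᴴ * (1 - H) * W₀) =
      (2 : ℂ)⁻¹ •
        ((((Real.sqrt 2 : ℂ))⁻¹ •
            Matrix.fromBlocks 1 (Complex.I • W₀)
              (-(Complex.I • (1 : Matrix (Fin n) (Fin n) ℂ))) (-W₀))ᴴ *
          Matrix.fromBlocks 1 (-((2 : ℂ) • K) - Complex.I • (1 - (2 : ℂ) • H))
            (-((2 : ℂ) • K) - Complex.I • (1 - (2 : ℂ) • H))ᴴ 1 *
          (((Real.sqrt 2 : ℂ))⁻¹ •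
            Matrix.fromBlocks 1 (Complex.I • W₀)
              (-(Complex.I • (1 : Matrix (Fin n) (Fin n) ℂ))) (-W₀))) := by
  have hW : W₀ᴴ * W₀ = 1 := by
    simpa [Matrix.star_eq_conjTranspose] using Matrix.mem_unitaryGroup_iff'.mp hW₀
  have hcomm : H * K = K * H := by
    refine commute_of_commute_sq hK ?_
    rw [hKsq]
    simp only [Matrix.mul_sub, Matrix.sub_mul, Matrix.mul_one, Matrix.one_mul, Matrix.mul_assoc]
  have hKK : K * K = H - H * H := by rw [hKsq, Matrix.mul_sub, Matrix.mul_one]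
  have hc : star (((Real.sqrt 2 : ℝ) : ℂ))⁻¹ * ((Real.sqrt 2 : ℂ))⁻¹ = (2 : ℂ)⁻¹ := by
    rw [star_inv₀, Complex.star_def, Complex.conj_ofReal, ← mul_inv]
    norm_num [← Complex.ofReal_mul, Real.mul_self_sqrt]
  have hI3 : Complex.I ^ 3 = -Complex.I := by
    rw [pow_succ, Complex.I_sq]; ring
  refine ⟨?_, ?_, ?_⟩
  · rw [Matrix.mem_unitaryGroup_iff']
    rw [Matrix.star_eq_conjTranspose, conjTranspose_smul]
    rw [Matrix.smul_mul, Matrix.mul_smul, smul_smul, hc]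
    have hB : (Matrix.fromBlocks 1 (Complex.I • W₀) (-(Complex.I • (1 : Matrix (Fin n) (Fin n) ℂ)))
        (-W₀))ᴴ * Matrix.fromBlocks 1 (Complex.I • W₀)
        (-(Complex.I • (1 : Matrix (Fin n) (Fin n) ℂ))) (-W₀) = (2 : ℂ) • 1 := by
      rw [fromBlocks_conjTranspose, fromBlocks_multiply]
      have h1 : (2 : ℂ) • (1 : Matrix (Fin n ⊕ Fin n) (Fin n ⊕ Fin n) ℂ)
          = Matrix.fromBlocks ((2:ℂ) • 1) 0 0 ((2:ℂ) • 1) := by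
        rw [← fromBlocks_one, fromBlocks_smul]
        simp
      rw [h1, Matrix.fromBlocks_inj]
      refine ⟨?_, ?_, ?_, ?_⟩ <;>
      · simp only [conjTranspose_one, conjTranspose_neg, conjTranspose_smul, Complex.star_def,
          Complex.conj_I, Matrix.one_mul, Matrix.mul_one, neg_smul, neg_neg, Matrix.neg_mul,
          Matrix.mul_neg, smul_mul_assoc, mul_smul_comm, smul_smul, Complex.I_mul_I, hW]
        match_scalars <;> (try ring_nf) <;> (try simp only [Complex.I_sq, hI3]) <;> ring
    rw [hB, smul_smul]
    norm_num
  · rw [Matrix.mem_unitaryGroup_iff']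
    have hstar : star (-((2 : ℂ) • K) - Complex.I • (1 - (2 : ℂ) • H))
        = -((2 : ℂ) • K) + Complex.I • (1 - (2 : ℂ) • H) := by
      simp [Matrix.star_eq_conjTranspose, conjTranspose_sub, conjTranspose_neg,
        conjTranspose_smul, Complex.conj_I, hK.1.eq, hH.1.eq, sub_eq_add_neg, smul_sub]
      abel
    rw [hstar]
    simp only [Matrix.add_mul, Matrix.mul_sub, Matrix.sub_mul, Matrix.neg_mul, Matrix.mul_neg,
      smul_mul_assoc, mul_smul_comm, smul_smul, smul_sub, smul_neg, sub_smul, one_smul,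
      Matrix.mul_one, Matrix.one_mul, hKK, hcomm, Complex.I_mul_I, neg_smul, neg_neg, neg_sub]
    match_scalars <;> (try ring_nf) <;> (try simp only [Complex.I_sq, hI3]) <;> ring
  · have hVstar : (-((2 : ℂ) • K) - Complex.I • (1 - (2 : ℂ) • H))ᴴ
        = -((2 : ℂ) • K) + Complex.I • (1 - (2 : ℂ) • H) := by
      simp [conjTranspose_sub, conjTranspose_neg, conjTranspose_smul, Complex.conj_I,
        hK.1.eq, hH.1.eq, sub_eq_add_neg, smul_sub]
      abel
    rw [hVstar, conjTranspose_smul, Matrix.smul_mul, Matrix.smul_mul, Matrix.mul_smul,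
      smul_smul, smul_smul, mul_assoc ((2:ℂ)⁻¹), hc]
    rw [fromBlocks_conjTranspose, fromBlocks_multiply, fromBlocks_multiply, fromBlocks_smul,
      Matrix.fromBlocks_inj]
    refine ⟨?_, ?_, ?_, ?_⟩ <;>
    · simp only [conjTranspose_one, conjTranspose_neg, conjTranspose_smul, Complex.star_def,
        Complex.conj_I, Matrix.one_mul, Matrix.mul_one, neg_smul, neg_neg, Matrix.neg_mul,
        Matrix.mul_neg, smul_mul_assoc, mul_smul_comm, smul_smul, Matrix.add_mul, Matrix.mul_add,
        Matrix.sub_mul, Matrix.mul_sub, smul_sub, smul_add, smul_neg, Matrix.mul_assoc, hW,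
        Complex.I_mul_I, Matrix.one_mul, Matrix.mul_one]
      match_scalars <;> (try ring_nf) <;> (try simp only [Complex.I_sq, hI3]) <;> ring
end
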